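/- arXiv:2401.07602 — 4 statements merged into one kernel-verified Lean document; each statement's English description precedes it below -/
import Mathlib

section
/- If A is a Z-tensor of order m and dimension n (i.e., A = sI - B with B entrywise nonnegative and s > 0) and there exists a positive vector x with A x^{m-1} > 0 entrywise, then A is a nonsingular M-tensor, i.e., s > ρ(B) where ρ(B) is the spectral radius of B. -/
open Finset Matrix

/-- Identity tensor of order `m`, dimension `n`: diagonal entries 1, others 0. -/
def idT (m n : ℕ) [NeZero m] : (Fin m → Fin n) → ℝ :=
  fun g => if ∀ k, g k = g 0 then 1 else 0

/-- Tensor–vector product `(A x^{m-1})_i = Σ_{i2..im} a_{i i2..im} x_{i2}⋯x_{im}`. -/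
def tvp {m n : ℕ} [NeZero m] (A : (Fin m → Fin n) → ℝ) (x : Fin n → ℝ) : Fin n → ℝ :=
  fun i => ∑ g : Fin m → Fin n,
    if g 0 = i then A g * ∏ k ∈ Finset.univ.erase 0, x (g k) else 0

/-- Complex tensor–vector product (for eigenvalues). -/
noncomputable def tvpC {m n : ℕ} [NeZero m] (A : (Fin m → Fin n) → ℝ) (x : Fin n → ℂ) : Fin n → ℂ :=
  fun i => ∑ g : Fin m → Fin n,
    if g 0 = i then (A g : ℂ) * ∏ k ∈ Finset.univ.erase 0, x (g k) else 0

/-- `lam` is an eigenvalue of the tensor `B`: `B x^{m-1} = lam x^{[m-1]}` for some `x ≠ 0`. -/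
def tEig {m n : ℕ} [NeZero m] (B : (Fin m → Fin n) → ℝ) (lam : ℂ) : Prop :=
  ∃ x : Fin n → ℂ, x ≠ 0 ∧ ∀ i, tvpC B x i = lam * x i ^ (m - 1)

/-- Tensor spectral radius. -/
noncomputable def tRho {m n : ℕ} [NeZero m] (B : (Fin m → Fin n) → ℝ) : ℝ :=
  sSup {r : ℝ | ∃ lam : ℂ, tEig B lam ∧ r = ‖lam‖}

/-- `A` is a nonsingular M-tensor: `A = s I - B`, `B ≥ 0`, `s > ρ(B)`. -/
def isNonsingMTensor {m n : ℕ} [NeZero m] (A : (Fin m → Fin n) → ℝ) : Prop :=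
  ∃ (s : ℝ) (B : (Fin m → Fin n) → ℝ),
    (∀ g, 0 ≤ B g) ∧ tRho B < s ∧ A = s • idT m n - B

/-- Majorization matrix `(M(A))_{ij} = a_{ijj...j}`. -/
def majMat {m n : ℕ} [NeZero m] (A : (Fin m → Fin n) → ℝ) : Matrix (Fin n) (Fin n) ℝ :=
  Matrix.of fun i j => A (fun k => if k = 0 then i else j)

/-- Matrix–tensor product `(P·A)_{i1 i2..im} = Σ_j P_{i1 j} a_{j i2..im}`. -/
def matTen {m n : ℕ} [NeZero m] (P : Matrix (Fin n) (Fin n) ℝ)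
    (A : (Fin m → Fin n) → ℝ) : (Fin m → Fin n) → ℝ :=
  fun g => ∑ j, P (g 0) j * A (Function.update g 0 j)

/-- `A` is row diagonal: entries vanish unless all indices `i2..im` coincide. -/
def rowDiag {m n : ℕ} [NeZero m] (A : (Fin m → Fin n) → ℝ) : Prop :=
  ∀ g : Fin m → Fin n, (∃ k l : Fin m, k ≠ 0 ∧ l ≠ 0 ∧ g k ≠ g l) → A g = 0

/-- Matrix eigenvalue over ℂ for a real matrix. -/
def matEig {n : ℕ} (N : Matrix (Fin n) (Fin n) ℝ) (lam : ℂ) : Prop :=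
  ∃ v : Fin n → ℂ, v ≠ 0 ∧ (N.map (fun a => (a : ℂ))) *ᵥ v = lam • v

/-- Matrix spectral radius. -/
noncomputable def matRho {n : ℕ} (N : Matrix (Fin n) (Fin n) ℝ) : ℝ :=
  sSup {r : ℝ | ∃ lam : ℂ, matEig N lam ∧ r = ‖lam‖}

/-- Nonsingular M-matrix: `M = s I - N`, `N ≥ 0`, `s > ρ(N)`. -/
def isNonsingMMatrix {n : ℕ} (M : Matrix (Fin n) (Fin n) ℝ) : Prop :=
  ∃ (s : ℝ) (N : Matrix (Fin n) (Fin n) ℝ),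
    (∀ i j, 0 ≤ N i j) ∧ matRho N < s ∧ M = s • (1 : Matrix (Fin n) (Fin n) ℝ) - N

lemma erase_card_aux (m : ℕ) [NeZero m] : (Finset.univ.erase (0 : Fin m)).card = m - 1 := by
  rw [Finset.card_erase_of_mem (Finset.mem_univ _), Finset.card_univ, Fintype.card_fin]

lemma idT_tvp {m n : ℕ} [NeZero m] (x : Fin n → ℝ) (i : Fin n) :
    tvp (idT m n) x i = x i ^ (m - 1) := by
  unfold tvp
  rw [Finset.sum_eq_single (fun _ => i)]
  · simp [idT, Finset.prod_const, erase_card_aux]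
  · intro g _ hg
    by_cases h0 : g 0 = i
    · have : ¬ ∀ k, g k = g 0 := by
        intro hall
        apply hg; funext k; rw [hall k, h0]
      simp only [idT, if_neg this, zero_mul, if_pos h0]
    · simp [h0]
  · simp

lemma tvp_sub_smul {m n : ℕ} [NeZero m] (s : ℝ) (B : (Fin m → Fin n) → ℝ)
    (x : Fin n → ℝ) (i : Fin n) :
    tvp (s • idT m n - B) x i = s * tvp (idT m n) x i - tvp B x i := by
  unfold tvp
  rw [Finset.mul_sum, ← Finset.sum_sub_distrib]
  apply Finset.sum_congr rfl
  intro g _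
  simp only [Pi.sub_apply, Pi.smul_apply, smul_eq_mul]
  split_ifs <;> ring

theorem stmt0 {m n : ℕ} [NeZero m] (hm : 2 ≤ m)
    (s : ℝ) (B A : (Fin m → Fin n) → ℝ)
    (hB : ∀ g, 0 ≤ B g) (hs : 0 < s) (hA : A = s • idT m n - B)
    (x : Fin n → ℝ) (hx : ∀ i, 0 < x i) (hAx : ∀ i, 0 < tvp A x i) :
    tRho B < s := by
  have hkey : ∀ i, tvp B x i < s * x i ^ (m - 1) := by
    intro i
    have h1 := hAx i
    rw [hA, tvp_sub_smul, idT_tvp] at h1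
    linarith
  have hBx0 : ∀ i, 0 ≤ tvp B x i := by
    intro i
    apply Finset.sum_nonneg
    intro g _
    split_ifs
    · exact mul_nonneg (hB g) (Finset.prod_nonneg fun k _ => (hx _).le)
    · exact le_rfl
  rcases Nat.eq_zero_or_pos n with hn | hn
  · subst hn
    have hempty : {r : ℝ | ∃ lam : ℂ, tEig B lam ∧ r = ‖lam‖} = ∅ := by
      ext r
      simp only [Set.mem_setOf_eq, Set.mem_empty_iff_false, iff_false]
      rintro ⟨lam, ⟨y, hy0, -⟩, -⟩
      exact hy0 (funext fun j => absurd j.2 (by omega))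
    rw [tRho, hempty, Real.sSup_empty]
    exact hs
  -- n ≥ 1
  haveI : Nonempty (Fin n) := ⟨⟨0, hn⟩⟩
  set r0 : ℝ := Finset.univ.sup' Finset.univ_nonempty (fun i => tvp B x i / x i ^ (m - 1)) with hr0
  have hxpow : ∀ i : Fin n, (0:ℝ) < x i ^ (m - 1) := fun i => pow_pos (hx i) _
  have hr0lt : r0 < s := by
    rw [hr0, Finset.sup'_lt_iff]
    intro i _
    rw [div_lt_iff₀ (hxpow i)]
    exact hkey i
  have hr00 : 0 ≤ r0 := by
    obtain ⟨i⟩ := (inferInstance : Nonempty (Fin n))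
    exact le_trans (div_nonneg (hBx0 i) (hxpow i).le)
      (Finset.le_sup' (fun i => tvp B x i / x i ^ (m - 1)) (Finset.mem_univ i))
  refine lt_of_le_of_lt ?_ hr0lt
  apply Real.sSup_le _ hr00
  rintro r ⟨lam, ⟨y, hy0, heig⟩, rfl⟩
  -- bound |lam| ≤ r0
  set c : ℝ := Finset.univ.sup' Finset.univ_nonempty (fun j => ‖y j‖ / x j) with hc
  have hcx : ∀ j, ‖y j‖ ≤ c * x j := by
    intro j
    have := Finset.le_sup' (fun j => ‖y j‖ / x j) (Finset.mem_univ j)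
    rw [← hc] at this
    calc ‖y j‖ = ‖y j‖ / x j * x j :=
          (div_mul_cancel₀ _ (hx j).ne').symm
      _ ≤ c * x j := mul_le_mul_of_nonneg_right this (hx j).le
  have hcpos : 0 < c := by
    obtain ⟨j, hj⟩ := Function.ne_iff.mp hy0
    calc (0:ℝ) < ‖y j‖ / x j :=
          div_pos (by simpa using hj) (hx j)
      _ ≤ c := by
          rw [hc]; exact Finset.le_sup' (fun j => ‖y j‖ / x j) (Finset.mem_univ j)
  obtain ⟨i, -, hi⟩ := Finset.exists_mem_eq_sup' (Finset.univ_nonempty (α := Fin n))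
    (fun j => ‖y j‖ / x j)
  have hci : ‖y i‖ = c * x i := by
    rw [hc, hi]
    exact (div_mul_cancel₀ _ (hx i).ne').symm
  -- the key estimate
  have hest : ‖lam‖ * (c * x i) ^ (m - 1) ≤ c ^ (m - 1) * tvp B x i := by
    have h1 : ‖tvpC B y i‖ = ‖lam‖ * (c * x i) ^ (m - 1) := by
      rw [heig i, norm_mul, norm_pow, hci]
    rw [← h1]
    calc ‖tvpC B y i‖
        ≤ ∑ g : Fin m → Fin n, ‖(if g 0 = i then (B g : ℂ) * ∏ k ∈ Finset.univ.erase 0, y (g k) else 0)‖ :=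
          norm_sum_le _ _
      _ ≤ ∑ g : Fin m → Fin n,
            (if g 0 = i then B g * ∏ k ∈ Finset.univ.erase 0, (c * x (g k)) else 0) := by
          apply Finset.sum_le_sum
          intro g _
          split_ifs with h
          · rw [norm_mul, Complex.norm_real, Real.norm_eq_abs, abs_of_nonneg (hB g), norm_prod]
            apply mul_le_mul_of_nonneg_left _ (hB g)
            apply Finset.prod_le_prod (fun k _ => (norm_nonneg _)) (fun k _ => hcx _)
          · simp
      _ = c ^ (m - 1) * tvp B x i := by
          rw [tvp, Finset.mul_sum]
          apply Finset.sum_congr rfl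
          intro g _
          split_ifs with h
          · rw [Finset.prod_mul_distrib, Finset.prod_const, erase_card_aux]
            ring
          · simp
  have hpow : (0:ℝ) < c ^ (m - 1) * x i ^ (m - 1) :=
    mul_pos (pow_pos hcpos _) (hxpow i)
  rw [mul_pow] at hest
  have h2 : tvp B x i ≤ r0 * x i ^ (m - 1) := by
    rw [hr0]
    have := Finset.le_sup' (fun i => tvp B x i / x i ^ (m - 1)) (Finset.mem_univ i)
    calc tvp B x i = tvp B x i / x i ^ (m - 1) * x i ^ (m - 1) :=
          (div_mul_cancel₀ _ (hxpow i).ne').symm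
      _ ≤ _ := mul_le_mul_of_nonneg_right this (hxpow i).le
  nlinarith [pow_pos hcpos (m-1), hxpow i]
end

section
/- If A is a nonsingular M-tensor of order m and dimension n, then its majorization matrix M(A), defined by (M(A))_{ij} = a_{i j j ... j}, is a nonsingular M-matrix. -/
open Finset Matrix

section
variable {m n : ℕ} [NeZero m]

example (hm : 2 ≤ m) : m - 1 ≠ 0 := by omega

lemma rpow_inv_pow (hm : 2 ≤ m) {a : ℝ} (ha : 0 ≤ a) :
    (a ^ (((m - 1 : ℕ) : ℝ))⁻¹) ^ (m - 1) = a := by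
  have h : ((m - 1 : ℕ) : ℝ) ≠ 0 := Nat.cast_ne_zero.mpr (by omega)
  rw [← Real.rpow_natCast (a ^ (((m - 1 : ℕ) : ℝ))⁻¹) (m - 1), ← Real.rpow_mul ha,
    inv_mul_cancel₀ h, Real.rpow_one]

lemma pow_rpow_inv (hm : 2 ≤ m) {a : ℝ} (ha : 0 ≤ a) :
    (a ^ (m - 1)) ^ (((m - 1 : ℕ) : ℝ))⁻¹ = a := by
  have h : ((m - 1 : ℕ) : ℝ) ≠ 0 := Nat.cast_ne_zero.mpr (by omega)
  rw [← Real.rpow_natCast a (m - 1), ← Real.rpow_mul ha, mul_inv_cancel₀ h, Real.rpow_one]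

end

lemma continuousOn_max {α : Type*} [TopologicalSpace α] {K : Set α} {f g : α → ℝ}
    (hf : ContinuousOn f K) (hg : ContinuousOn g K) :
    ContinuousOn (fun x => max (f x) (g x)) K :=
  continuous_max.comp_continuousOn (f := fun x => (f x, g x)) (hf.prodMk hg)

lemma continuousOn_sup' {ι α : Type*} [TopologicalSpace α] {s : Finset ι} (hs : s.Nonempty)
    {K : Set α} {f : ι → α → ℝ} (hf : ∀ i ∈ s, ContinuousOn (f i) K) :
    ContinuousOn (fun x => s.sup' hs fun i => f i x) K := by
  induction hs using Finset.Nonempty.cons_induction with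
  | singleton a => simpa using hf a (by simp)
  | cons a t ha hts ih =>
    have hrw : (fun x => (Finset.cons a t ha).sup' (Finset.cons_nonempty ha) fun i => f i x)
        = fun x => max (f a x) (t.sup' hts fun i => f i x) := by
      funext x
      rw [Finset.sup'_cons hts]
    rw [hrw]
    exact continuousOn_max (hf a (by simp)) (ih fun i hi => hf i (by simp [hi]))

namespace MTaux
variable {m n : ℕ} [NeZero m]

def phi (i j : Fin n) : Fin m → Fin n := fun k => if k = 0 then i else j

lemma one_ne_zero' (hm : 2 ≤ m) : (1 : Fin m) ≠ 0 := by
  have h1 : (1 : ℕ) < m := hm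
  simp [Fin.ext_iff, Fin.val_one, Nat.mod_eq_of_lt h1]

lemma card_erase0 : (Finset.univ.erase (0 : Fin m)).card = m - 1 := by
  rw [Finset.card_erase_of_mem (mem_univ _), Finset.card_univ, Fintype.card_fin]

lemma prod_phi {M : Type*} [CommMonoid M] (y : Fin n → M) (i j : Fin n) :
    ∏ k ∈ Finset.univ.erase (0 : Fin m), y (phi i j k) = y j ^ (m - 1) := by
  rw [← card_erase0 (m := m), ← Finset.prod_const]
  exact Finset.prod_congr rfl fun k hk => by
    simp [phi, (Finset.mem_erase.mp hk).1]

lemma phi_zero (i j : Fin n) : phi (m := m) i j 0 = i := by simp [phi]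

lemma phi_injective (hm : 2 ≤ m) (i : Fin n) : Function.Injective (phi (m := m) i) := by
  intro a b hab
  have := congrFun hab 1
  simpa [phi, one_ne_zero' hm] using this

lemma tvp_term_nonneg (B : (Fin m → Fin n) → ℝ) (hB : ∀ g, 0 ≤ B g)
    (x : Fin n → ℝ) (hx : ∀ l, 0 ≤ x l) (i : Fin n) (g : Fin m → Fin n) :
    0 ≤ (if g 0 = i then B g * ∏ k ∈ Finset.univ.erase 0, x (g k) else 0) := by
  split
  · exact mul_nonneg (hB g) (Finset.prod_nonneg fun k _ => hx _)
  · exact le_refl 0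

lemma tvp_nonneg (B : (Fin m → Fin n) → ℝ) (hB : ∀ g, 0 ≤ B g)
    (x : Fin n → ℝ) (hx : ∀ l, 0 ≤ x l) (i : Fin n) : 0 ≤ tvp B x i :=
  Finset.sum_nonneg fun g _ => tvp_term_nonneg B hB x hx i g

lemma tvp_ge_single (B : (Fin m → Fin n) → ℝ) (hB : ∀ g, 0 ≤ B g)
    (x : Fin n → ℝ) (hx : ∀ l, 0 ≤ x l) (i j : Fin n) :
    B (phi i j) * x j ^ (m - 1) ≤ tvp B x i := by
  have := Finset.single_le_sum (f := fun g => if g 0 = i then B g * ∏ k ∈ Finset.univ.erase 0, x (g k) else 0)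
    (fun g _ => tvp_term_nonneg B hB x hx i g) (Finset.mem_univ (phi i j))
  simpa [tvp, phi_zero, prod_phi] using this

lemma tvp_pos (hm : 2 ≤ m) (C : (Fin m → Fin n) → ℝ) (hC : ∀ g, 0 < C g)
    (x : Fin n → ℝ) (hx : ∀ l, 0 ≤ x l) {j : Fin n} (hj : 0 < x j) (i : Fin n) :
    0 < tvp C x i := by
  refine lt_of_lt_of_le ?_ (tvp_ge_single C (fun g => (hC g).le) x hx i j)
  exact mul_pos (hC _) (pow_pos hj _)

lemma tvp_le_sum (C : (Fin m → Fin n) → ℝ) (hC : ∀ g, 0 ≤ C g)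
    (x : Fin n → ℝ) (hx : ∀ l, 0 ≤ x l) (hx1 : ∀ l, x l ≤ 1) (i : Fin n) :
    tvp C x i ≤ ∑ g : Fin m → Fin n, C g := by
  apply Finset.sum_le_sum
  intro g _
  split
  · have h1 : ∏ k ∈ Finset.univ.erase (0 : Fin m), x (g k) ≤ 1 :=
      Finset.prod_le_one (fun k _ => hx _) (fun k _ => hx1 _)
    calc C g * ∏ k ∈ Finset.univ.erase 0, x (g k) ≤ C g * 1 :=
          mul_le_mul_of_nonneg_left h1 (hC g)
      _ = C g := mul_one _
  · exact hC g

lemma tvp_mono (B C : (Fin m → Fin n) → ℝ) (hBC : ∀ g, B g ≤ C g) (hB : ∀ g, 0 ≤ B g)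
    (x : Fin n → ℝ) (hx : ∀ l, 0 ≤ x l) (i : Fin n) : tvp B x i ≤ tvp C x i := by
  apply Finset.sum_le_sum
  intro g _
  split
  · exact mul_le_mul_of_nonneg_right (hBC g) (Finset.prod_nonneg fun k _ => hx _)
  · exact le_refl 0

lemma tvp_smul (C : (Fin m → Fin n) → ℝ) (a : ℝ) (x : Fin n → ℝ) (i : Fin n) :
    tvp C (a • x) i = a ^ (m - 1) * tvp C x i := by
  unfold tvp
  rw [Finset.mul_sum]
  apply Finset.sum_congr rfl
  intro g _
  split
  · simp only [Pi.smul_apply, smul_eq_mul]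
    rw [Finset.prod_mul_distrib, Finset.prod_const, card_erase0]
    ring
  · ring

lemma tvp_continuous (C : (Fin m → Fin n) → ℝ) (i : Fin n) :
    Continuous fun x : Fin n → ℝ => tvp C x i := by
  unfold tvp
  apply continuous_finset_sum
  intro g _
  by_cases h : g 0 = i
  · simp only [h, if_true]
    exact continuous_const.mul (continuous_finset_prod _ fun k _ => continuous_apply _)
  · simp only [h, if_false]
    exact continuous_const

lemma tvp_add_const (B : (Fin m → Fin n) → ℝ) (e : ℝ) (x : Fin n → ℝ) (i : Fin n) :
    tvp (fun g => B g + e) x i = tvp B x i + e * tvp (m := m) (n := n) (fun _ => (1:ℝ)) x i := by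
  unfold tvp
  rw [Finset.mul_sum, ← Finset.sum_add_distrib]
  apply Finset.sum_congr rfl
  intro g _
  split
  · ring
  · ring


lemma tvp_lt_of_dominated (hm : 2 ≤ m) (C : (Fin m → Fin n) → ℝ) (hC : ∀ g, 0 < C g)
    {u v : Fin n → ℝ} (hu : ∀ l, 0 ≤ u l) {Mu : ℝ}
    (hle : ∀ l, u l ≤ Mu * v l) {j : Fin n} (hj : u j < Mu * v j) (i : Fin n) :
    tvp C u i < Mu ^ (m - 1) * tvp C v i := by
  unfold tvp
  rw [Finset.mul_sum]
  refine Finset.sum_lt_sum (fun g _ => ?_) ⟨phi i j, Finset.mem_univ _, ?_⟩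
  · split
    · have h1 : ∏ k ∈ Finset.univ.erase (0 : Fin m), u (g k)
          ≤ ∏ k ∈ Finset.univ.erase (0 : Fin m), (Mu * v (g k)) :=
        Finset.prod_le_prod (fun k _ => hu _) (fun k _ => hle _)
      have h2 : ∏ k ∈ Finset.univ.erase (0 : Fin m), (Mu * v (g k))
          = Mu ^ (m - 1) * ∏ k ∈ Finset.univ.erase (0 : Fin m), v (g k) := by
        rw [Finset.prod_mul_distrib, Finset.prod_const, card_erase0]
      rw [mul_left_comm]
      exact mul_le_mul_of_nonneg_left (h1.trans h2.le) (hC g).le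
    · simp
  · rw [if_pos (phi_zero i j), if_pos (phi_zero i j), prod_phi, prod_phi]
    have hpow : u j ^ (m - 1) < (Mu * v j) ^ (m - 1) :=
      pow_lt_pow_left₀ hj (hu j) (by omega)
    refine lt_of_lt_of_le (mul_lt_mul_of_pos_left hpow (hC _)) (le_of_eq ?_)
    rw [mul_pow]; ring


lemma sum_one_exists_inv_le {x : Fin n → ℝ} (hn : 0 < n) (hsum : ∑ i, x i = 1) :
    ∃ j, (n : ℝ)⁻¹ ≤ x j := by
  haveI : NeZero n := ⟨hn.ne'⟩
  by_contra hcon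
  push_neg at hcon
  have : ∑ i, x i < ∑ _i : Fin n, (n : ℝ)⁻¹ :=
    Finset.sum_lt_sum_of_nonempty Finset.univ_nonempty fun i _ => hcon i
  rw [hsum, Finset.sum_const, Finset.card_univ, Fintype.card_fin, nsmul_eq_mul,
    mul_inv_cancel₀ (by exact_mod_cast hn.ne' : (n:ℝ) ≠ 0)] at this
  exact lt_irrefl 1 this

lemma posEig (hm : 2 ≤ m) (hn : 0 < n) (C : (Fin m → Fin n) → ℝ) (hC : ∀ g, 0 < C g) :
    ∃ (x : Fin n → ℝ) (lam : ℝ), (∀ i, 0 < x i) ∧ (∑ i, x i = 1) ∧ 0 < lam ∧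
      ∀ i, tvp C x i = lam * x i ^ (m - 1) := by
  haveI : NeZero n := ⟨hn.ne'⟩
  have hne : (Finset.univ : Finset (Fin n)).Nonempty := Finset.univ_nonempty
  set p : ℝ := ((m - 1 : ℕ) : ℝ)⁻¹ with hpdef
  have hmp : (0:ℝ) < ((m - 1 : ℕ) : ℝ) := by
    have : 0 < m - 1 := by omega
    exact_mod_cast this
  have hp : 0 < p := inv_pos.mpr hmp
  set Δ : Set (Fin n → ℝ) := stdSimplex ℝ (Fin n) with hΔdef
  set T : (Fin n → ℝ) → Fin n → ℝ := fun x i => (tvp C x i) ^ p with hTdef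
  -- positivity of tvp for nonneg, somewhere-positive vectors
  have htvp_pos : ∀ x : Fin n → ℝ, (∀ l, 0 ≤ x l) → (∃ j, 0 < x j) → ∀ i, 0 < tvp C x i := by
    rintro x hx0 ⟨j, hj⟩ i
    exact tvp_pos hm C hC x hx0 hj i
  have hT_pos : ∀ x : Fin n → ℝ, (∀ l, 0 ≤ x l) → (∃ j, 0 < x j) → ∀ i, 0 < T x i := by
    intro x hx0 hj i
    exact Real.rpow_pos_of_pos (htvp_pos x hx0 hj i) p
  -- bounds on Δ
  set c1 : ℝ := ∑ g : Fin m → Fin n, C g with hc1def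
  have hc1 : 0 < c1 := Finset.sum_pos (fun g _ => hC g) Finset.univ_nonempty
  have htvp_le : ∀ x ∈ Δ, ∀ i, tvp C x i ≤ c1 := by
    intro x hx i
    refine tvp_le_sum C (fun g => (hC g).le) x hx.1 (fun l => ?_) i
    calc x l ≤ ∑ i, x i := Finset.single_le_sum (fun i _ => hx.1 i) (Finset.mem_univ l)
      _ = 1 := hx.2
  set cmin : ℝ := Finset.univ.inf' Finset.univ_nonempty C with hcmindef
  have hcmin : 0 < cmin := by
    rw [hcmindef, Finset.lt_inf'_iff]
    exact fun g _ => hC g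
  set c0 : ℝ := cmin * ((n : ℝ)⁻¹) ^ (m - 1) with hc0def
  have hninv : (0:ℝ) < (n : ℝ)⁻¹ := by
    have : (0:ℝ) < (n:ℝ) := by exact_mod_cast hn
    exact inv_pos.mpr this
  have hc0 : 0 < c0 := mul_pos hcmin (pow_pos hninv _)
  have htvp_ge : ∀ x ∈ Δ, ∀ i, c0 ≤ tvp C x i := by
    intro x hx i
    obtain ⟨j, hj⟩ := sum_one_exists_inv_le hn hx.2
    calc c0 = cmin * ((n : ℝ)⁻¹) ^ (m - 1) := hc0def
      _ ≤ C (phi i j) * x j ^ (m - 1) := by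
          apply mul_le_mul (Finset.inf'_le C (Finset.mem_univ _))
            (pow_le_pow_left₀ hninv.le hj _) (pow_nonneg hninv.le _) (hC _).le
      _ ≤ tvp C x i := tvp_ge_single C (fun g => (hC g).le) x hx.1 i j
  set δ0 : ℝ := c0 ^ p with hδ0def
  set δ1 : ℝ := c1 ^ p with hδ1def
  have hδ0 : 0 < δ0 := Real.rpow_pos_of_pos hc0 p
  have hδ1 : 0 < δ1 := Real.rpow_pos_of_pos hc1 p
  have hT_lb : ∀ x ∈ Δ, ∀ i, δ0 ≤ T x i := fun x hx i =>
    Real.rpow_le_rpow hc0.le (htvp_ge x hx i) hp.le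
  have hT_ub : ∀ x ∈ Δ, ∀ i, T x i ≤ δ1 := fun x hx i =>
    Real.rpow_le_rpow (le_trans hc0.le (htvp_ge x hx i)) (htvp_le x hx i) hp.le
  set σ : (Fin n → ℝ) → ℝ := fun x => ∑ i, T x i with hσdef
  have hσ_pos : ∀ x ∈ Δ, 0 < σ x := by
    intro x hx
    refine Finset.sum_pos (fun i _ => ?_) hne
    obtain ⟨j, hj⟩ := sum_one_exists_inv_le hn hx.2
    exact hT_pos x hx.1 ⟨j, lt_of_lt_of_le hninv hj⟩ i
  have hσ_ub : ∀ x ∈ Δ, σ x ≤ n * δ1 := by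
    intro x hx
    calc σ x ≤ ∑ _i : Fin n, δ1 := Finset.sum_le_sum fun i _ => hT_ub x hx i
      _ = n * δ1 := by rw [Finset.sum_const, Finset.card_univ, Fintype.card_fin, nsmul_eq_mul]
  set S : (Fin n → ℝ) → Fin n → ℝ := fun x => (σ x)⁻¹ • T x with hSdef
  set δ : ℝ := δ0 / ((n : ℝ) * δ1) with hδdef
  have hδ : 0 < δ := div_pos hδ0 (mul_pos (by exact_mod_cast hn) hδ1)
  have hS_mem : ∀ x ∈ Δ, S x ∈ Δ ∧ ∀ i, δ ≤ S x i := by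
    intro x hx
    have hσx := hσ_pos x hx
    constructor
    · constructor
      · intro i
        exact mul_nonneg (inv_nonneg.mpr hσx.le) (hδ0.le.trans (hT_lb x hx i))
      · show ∑ i, (σ x)⁻¹ * T x i = 1
        rw [← Finset.mul_sum]
        exact inv_mul_cancel₀ hσx.ne'
    · intro i
      show δ ≤ (σ x)⁻¹ * T x i
      rw [inv_mul_eq_div, hδdef]
      exact div_le_div₀ (hδ0.le.trans (hT_lb x hx i)) (hT_lb x hx i) hσx (hσ_ub x hx)
  -- the compact set K
  set K : Set (Fin n → ℝ) := Δ ∩ ⋂ i, {x : Fin n → ℝ | δ ≤ x i} with hKdef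
  have hKsubΔ : K ⊆ Δ := Set.inter_subset_left
  have hK_pos : ∀ x ∈ K, ∀ i, 0 < x i := by
    intro x hx i
    have := Set.mem_iInter.mp hx.2 i
    exact lt_of_lt_of_le hδ this
  have hK_compact : IsCompact K := by
    apply (isCompact_stdSimplex ℝ (Fin n)).inter_right
    exact isClosed_iInter fun i => isClosed_le continuous_const (continuous_apply i)
  have hSK : ∀ x ∈ Δ, S x ∈ K := by
    intro x hx
    obtain ⟨h1, h2⟩ := hS_mem x hx
    exact ⟨h1, Set.mem_iInter.mpr fun i => h2 i⟩
  have hcenterΔ : (fun _ : Fin n => (n:ℝ)⁻¹) ∈ Δ := by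
    constructor
    · intro i; exact hninv.le
    · rw [Finset.sum_const, Finset.card_univ, Fintype.card_fin, nsmul_eq_mul,
        mul_inv_cancel₀ (by exact_mod_cast hn.ne' : (n:ℝ) ≠ 0)]
  have hK_ne : K.Nonempty := ⟨S (fun _ => (n:ℝ)⁻¹), hSK _ hcenterΔ⟩
  -- continuity
  have hTc : ∀ i, Continuous fun x : Fin n → ℝ => T x i := by
    intro i
    exact (tvp_continuous C i).rpow_const fun x => Or.inr hp.le
  set G : (Fin n → ℝ) → ℝ := fun x =>
    (Finset.univ.sup' hne fun i => x i / T x i) * (Finset.univ.sup' hne fun i => T x i / x i)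
    with hGdef
  have hGc : ContinuousOn G K := by
    apply ContinuousOn.mul
    · apply continuousOn_sup' hne
      intro i _
      exact ContinuousOn.div (continuous_apply i).continuousOn (hTc i).continuousOn
        fun x hx => (hT_pos x (fun l => (hK_pos x hx l).le) ⟨i, hK_pos x hx i⟩ i).ne'
    · apply continuousOn_sup' hne
      intro i _
      exact ContinuousOn.div (hTc i).continuousOn (continuous_apply i).continuousOn
        fun x hx => (hK_pos x hx i).ne'
  obtain ⟨xs, hxsK, hmin⟩ := hK_compact.exists_isMinOn hK_ne hGc
  have hxs_pos : ∀ i, 0 < xs i := hK_pos xs hxsK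
  set v : Fin n → ℝ := T xs with hvdef
  have hv_pos : ∀ i, 0 < v i := fun i =>
    hT_pos xs (fun l => (hxs_pos l).le) ⟨0, hxs_pos 0⟩ i
  set Mu : ℝ := Finset.univ.sup' hne fun i => xs i / v i with hMudef
  set Mv : ℝ := Finset.univ.sup' hne fun i => v i / xs i with hMvdef
  have hMu_pos : 0 < Mu :=
    lt_of_lt_of_le (div_pos (hxs_pos 0) (hv_pos 0))
      (Finset.le_sup' (fun i => xs i / v i) (Finset.mem_univ (0 : Fin n)))
  have hMv_pos : 0 < Mv :=
    lt_of_lt_of_le (div_pos (hv_pos 0) (hxs_pos 0))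
      (Finset.le_sup' (fun i => v i / xs i) (Finset.mem_univ (0 : Fin n)))
  have hle_u : ∀ l, xs l ≤ Mu * v l := by
    intro l
    have h := Finset.le_sup' (fun i => xs i / v i) (Finset.mem_univ l)
    exact (div_le_iff₀ (hv_pos l)).mp h
  have hle_v : ∀ l, v l ≤ Mv * xs l := by
    intro l
    have h := Finset.le_sup' (fun i => v i / xs i) (Finset.mem_univ l)
    exact (div_le_iff₀ (hxs_pos l)).mp h
  have htvp_xs_nonneg : ∀ i, 0 ≤ tvp C xs i :=
    fun i => tvp_nonneg C (fun g => (hC g).le) xs (fun l => (hxs_pos l).le) i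
  have hv_eq : ∀ i, (v i) ^ (m - 1) = tvp C xs i := by
    intro i
    show ((tvp C xs i) ^ p) ^ (m - 1) = tvp C xs i
    rw [hpdef]
    exact rpow_inv_pow hm (htvp_xs_nonneg i)
  by_cases hcase : ∀ l, xs l = Mu * v l
  · -- fixed point: eigenvector found
    refine ⟨xs, (Mu⁻¹) ^ (m - 1), hxs_pos, (hKsubΔ hxsK).2, pow_pos (inv_pos.mpr hMu_pos) _, ?_⟩
    intro i
    have hvi : v i = Mu⁻¹ * xs i := by
      rw [hcase i]
      field_simp
    rw [← hv_eq i, hvi, mul_pow]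
  · -- contraction step: contradiction with minimality
    exfalso
    push_neg at hcase
    obtain ⟨j, hj0⟩ := hcase
    have hj : xs j < Mu * v j := lt_of_le_of_ne (hle_u j) hj0
    have hcase' : ∃ j', v j' < Mv * xs j' := by
      by_cases hc2 : ∀ l, v l = Mv * xs l
      · exfalso
        apply hj0
        have hratio : ∀ i : Fin n, xs i / v i = Mv⁻¹ := by
          intro i
          rw [hc2 i]
          rw [eq_comm, inv_eq_iff_eq_inv, eq_comm, inv_div]
          rw [mul_div_assoc, div_self (hxs_pos i).ne']
          rw [mul_one]
        have hMuMv : Mu = Mv⁻¹ := by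
          rw [hMudef]
          rw [show (fun i => xs i / v i) = (fun _ : Fin n => Mv⁻¹) from funext hratio]
          exact Finset.sup'_const hne _
        rw [hMuMv, hc2 j, ← mul_assoc, inv_mul_cancel₀ hMv_pos.ne', one_mul]
      · push_neg at hc2
        obtain ⟨j', hj'⟩ := hc2
        exact ⟨j', lt_of_le_of_ne (hle_v j') hj'⟩
    obtain ⟨j', hj'⟩ := hcase'
    have hxs_nn : ∀ l, 0 ≤ xs l := fun l => (hxs_pos l).le
    have hv_nn : ∀ l, 0 ≤ v l := fun l => (hv_pos l).le
    have htvp_v_nonneg : ∀ i, 0 ≤ tvp C v i :=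
      fun i => tvp_nonneg C (fun g => (hC g).le) v hv_nn i
    have hTv_pos : ∀ i, 0 < T v i := hT_pos v hv_nn ⟨0, hv_pos 0⟩
    have htuv : ∀ i, tvp C xs i < Mu ^ (m - 1) * tvp C v i :=
      fun i => tvp_lt_of_dominated hm C hC hxs_nn hle_u hj i
    have htvu : ∀ i, tvp C v i < Mv ^ (m - 1) * tvp C xs i :=
      fun i => tvp_lt_of_dominated hm C hC hv_nn hle_v hj' i
    have hTuv : ∀ i, v i < Mu * T v i := by
      intro i
      have h1 := Real.rpow_lt_rpow (htvp_xs_nonneg i) (htuv i) hp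
      rw [Real.mul_rpow (pow_nonneg hMu_pos.le _) (htvp_v_nonneg i), hpdef,
        pow_rpow_inv hm hMu_pos.le] at h1
      show (tvp C xs i) ^ p < Mu * (tvp C v i) ^ p
      rw [hpdef]
      exact h1
    have hTvu : ∀ i, T v i < Mv * v i := by
      intro i
      have h1 := Real.rpow_lt_rpow (htvp_v_nonneg i) (htvu i) hp
      rw [Real.mul_rpow (pow_nonneg hMv_pos.le _) (htvp_xs_nonneg i), hpdef,
        pow_rpow_inv hm hMv_pos.le] at h1
      show (tvp C v i) ^ p < Mv * (tvp C xs i) ^ p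
      rw [hpdef]
      exact h1
    -- compute G (S xs)
    set a : ℝ := (σ xs)⁻¹ with hadef
    have ha_pos : 0 < a := inv_pos.mpr (hσ_pos xs (hKsubΔ hxsK))
    have hSxs : S xs = a • v := rfl
    have hTSxs : ∀ i, T (S xs) i = a * T v i := by
      intro i
      show (tvp C (a • v) i) ^ p = a * (tvp C v i) ^ p
      rw [tvp_smul, Real.mul_rpow (pow_nonneg ha_pos.le _) (htvp_v_nonneg i), hpdef,
        pow_rpow_inv hm ha_pos.le]
    have hGSxs : G (S xs) = (Finset.univ.sup' hne fun i => v i / T v i) *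
        (Finset.univ.sup' hne fun i => T v i / v i) := by
      have e1 : (Finset.univ.sup' hne fun i => S xs i / T (S xs) i)
          = (Finset.univ.sup' hne fun i => v i / T v i) := by
        apply Finset.sup'_congr hne rfl
        intro i _
        rw [hTSxs i]
        show (a * v i) / (a * T v i) = v i / T v i
        rw [mul_div_mul_left _ _ ha_pos.ne']
      have e2 : (Finset.univ.sup' hne fun i => T (S xs) i / S xs i)
          = (Finset.univ.sup' hne fun i => T v i / v i) := by
        apply Finset.sup'_congr hne rfl
        intro i _
        rw [hTSxs i]
        show (a * T v i) / (a * v i) = T v i / v i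
        rw [mul_div_mul_left _ _ ha_pos.ne']
      show (Finset.univ.sup' hne fun i => S xs i / T (S xs) i) *
          (Finset.univ.sup' hne fun i => T (S xs) i / S xs i) = _
      rw [e1, e2]
    have hs1 : (Finset.univ.sup' hne fun i => v i / T v i) < Mu :=
      Finset.sup'_lt_iff hne |>.mpr fun i _ => (div_lt_iff₀ (hTv_pos i)).mpr
        (hTuv i)
    have hs2 : (Finset.univ.sup' hne fun i => T v i / v i) < Mv :=
      Finset.sup'_lt_iff hne |>.mpr fun i _ => (div_lt_iff₀ (hv_pos i)).mpr
        (hTvu i)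
    have hs1_nn : 0 ≤ Finset.univ.sup' hne fun i => v i / T v i :=
      le_trans (div_nonneg (hv_nn 0) (hTv_pos 0).le)
        (Finset.le_sup' (fun i => v i / T v i) (Finset.mem_univ (0 : Fin n)))
    have hs2_nn : 0 ≤ Finset.univ.sup' hne fun i => T v i / v i :=
      le_trans (div_nonneg (hTv_pos 0).le (hv_nn 0))
        (Finset.le_sup' (fun i => T v i / v i) (Finset.mem_univ (0 : Fin n)))
    have hlt : G (S xs) < Mu * Mv := by
      rw [hGSxs]
      exact mul_lt_mul'' hs1 hs2 hs1_nn hs2_nn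
    have hGxs : G xs = Mu * Mv := rfl
    have hge : G xs ≤ G (S xs) := hmin (hSK xs (hKsubΔ hxsK))
    rw [hGxs] at hge
    exact absurd (lt_of_le_of_lt hge hlt) (lt_irrefl _)

open Filter Topology

lemma pfLite (hm : 2 ≤ m) (hn : 0 < n) (B : (Fin m → Fin n) → ℝ) (hB : ∀ g, 0 ≤ B g) (s : ℝ)
    (H : ∀ x : Fin n → ℝ, (∀ i, 0 < x i) → ∃ i, s * x i ^ (m - 1) ≤ tvp B x i) :
    ∃ (lam : ℝ) (x : Fin n → ℝ), s ≤ lam ∧ (∀ i, 0 ≤ x i) ∧ (∑ i, x i = 1) ∧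
      ∀ i, tvp B x i = lam * x i ^ (m - 1) := by
  haveI : NeZero n := ⟨hn.ne'⟩
  set c1 : ℝ := ∑ g : Fin m → Fin n, (B g + 1) with hc1def
  set Λ : ℝ := c1 * (n : ℝ) ^ (m - 1) with hΛdef
  have hnpos : (0:ℝ) < (n:ℝ) := by exact_mod_cast hn
  have hninv : (0:ℝ) < (n : ℝ)⁻¹ := inv_pos.mpr hnpos
  have hex : ∀ k : ℕ, ∃ (x : Fin n → ℝ) (lam : ℝ), (∀ i, 0 < x i) ∧ (∑ i, x i = 1) ∧
      0 < lam ∧ ∀ i, tvp (fun g => B g + ((k:ℝ)+1)⁻¹) x i = lam * x i ^ (m - 1) := by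
    intro k
    apply posEig hm hn
    intro g
    have : (0:ℝ) < ((k:ℝ)+1)⁻¹ := by positivity
    linarith [hB g]
  choose X L hXpos hXsum hLpos hEig using hex
  have hXmem : ∀ k, X k ∈ stdSimplex ℝ (Fin n) := fun k => ⟨fun i => (hXpos k i).le, hXsum k⟩
  have hXle1 : ∀ k l, X k l ≤ 1 := by
    intro k l
    calc X k l ≤ ∑ i, X k i := Finset.single_le_sum (fun i _ => (hXpos k i).le) (Finset.mem_univ l)
      _ = 1 := hXsum k
  -- lower bound s ≤ L k
  have hsL : ∀ k, s ≤ L k := by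
    intro k
    obtain ⟨i, hi⟩ := H (X k) (hXpos k)
    have h2 : tvp B (X k) i ≤ tvp (fun g => B g + ((k:ℝ)+1)⁻¹) (X k) i := by
      apply tvp_mono _ _ _ hB (X k) (fun l => (hXpos k l).le) i
      intro g
      have : (0:ℝ) < ((k:ℝ)+1)⁻¹ := by positivity
      linarith
    have h3 : s * X k i ^ (m - 1) ≤ L k * X k i ^ (m - 1) := by
      rw [← hEig k i]
      exact hi.trans h2
    exact le_of_mul_le_mul_right h3 (pow_pos (hXpos k i) _)
  -- upper bound L k ≤ Λ
  have hLΛ : ∀ k, L k ≤ Λ := by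
    intro k
    obtain ⟨j, hj⟩ := sum_one_exists_inv_le hn (hXsum k)
    have h1 : tvp (fun g => B g + ((k:ℝ)+1)⁻¹) (X k) j ≤ c1 := by
      refine le_trans (tvp_le_sum _ ?_ (X k) (fun l => (hXpos k l).le) (hXle1 k) j) ?_
      · intro g
        have : (0:ℝ) < ((k:ℝ)+1)⁻¹ := by positivity
        linarith [hB g]
      · apply Finset.sum_le_sum
        intro g _
        have h4 : ((k:ℝ)+1)⁻¹ ≤ 1 := by
          rw [inv_le_one_iff₀]
          right
          linarith [Nat.cast_nonneg (α := ℝ) k]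
        linarith
    have h2 : L k * ((n:ℝ)⁻¹) ^ (m-1) ≤ L k * X k j ^ (m-1) :=
      mul_le_mul_of_nonneg_left (pow_le_pow_left₀ hninv.le hj _) (hLpos k).le
    rw [← hEig k j] at h2
    have h3 := h2.trans h1
    rw [inv_pow] at h3
    have h5 := mul_le_mul_of_nonneg_right h3 (by positivity : (0:ℝ) ≤ (n:ℝ) ^ (m-1))
    rw [mul_assoc, inv_mul_cancel₀ (by positivity : ((n:ℝ) ^ (m-1)) ≠ 0), mul_one] at h5
    exact h5
  -- compactness
  set Q : Set ((Fin n → ℝ) × ℝ) := (stdSimplex ℝ (Fin n)) ×ˢ (Set.Icc s Λ) with hQdef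
  have hQcomp : IsCompact Q := (isCompact_stdSimplex ℝ (Fin n)).prod isCompact_Icc
  have hseq : ∀ k : ℕ, (X k, L k) ∈ Q := fun k => ⟨hXmem k, ⟨hsL k, hLΛ k⟩⟩
  obtain ⟨⟨xb, lb⟩, hmemQ, φ, hφ, hconv⟩ := hQcomp.tendsto_subseq hseq
  have hx_conv : Tendsto (fun k => X (φ k)) atTop (𝓝 xb) :=
    (continuous_fst.tendsto _).comp hconv
  have hl_conv : Tendsto (fun k => L (φ k)) atTop (𝓝 lb) :=
    (continuous_snd.tendsto _).comp hconv
  set W : ℝ := (Fintype.card (Fin m → Fin n) : ℝ) with hWdef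
  have hkey : ∀ k i, tvp B (X k) i + ((k:ℝ)+1)⁻¹ * tvp (m := m) (n := n) (fun _ => (1:ℝ)) (X k) i
      = L k * X k i ^ (m - 1) := by
    intro k i
    rw [← tvp_add_const]
    exact hEig k i
  have hW_bd : ∀ k i, tvp (m := m) (n := n) (fun _ => (1:ℝ)) (X k) i ≤ W := by
    intro k i
    refine le_trans (tvp_le_sum _ (fun g => zero_le_one) (X k) (fun l => (hXpos k l).le)
      (hXle1 k) i) ?_
    rw [Finset.sum_const, Finset.card_univ, nsmul_eq_mul, mul_one, hWdef]
  have hW_nn : ∀ k i, 0 ≤ tvp (m := m) (n := n) (fun _ => (1:ℝ)) (X k) i := fun k i =>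
    tvp_nonneg _ (fun g => zero_le_one) (X k) (fun l => (hXpos k l).le) i
  have heqb : ∀ i, tvp B xb i = lb * xb i ^ (m - 1) := by
    intro i
    have hT1 : Tendsto (fun k => tvp B (X (φ k)) i) atTop (𝓝 (tvp B xb i)) :=
      ((tvp_continuous B i).tendsto xb).comp hx_conv
    have hT2 : Tendsto (fun k => ((φ k : ℝ)+1)⁻¹ *
        tvp (m := m) (n := n) (fun _ => (1:ℝ)) (X (φ k)) i) atTop (𝓝 0) := by
      apply squeeze_zero (fun k => mul_nonneg (by positivity) (hW_nn (φ k) i))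
        (fun k => mul_le_mul_of_nonneg_left (hW_bd (φ k) i) (by positivity))
      have hbase : Tendsto (fun k : ℕ => ((k : ℝ)+1)⁻¹ * W) atTop (𝓝 0) := by
        rw [show (0:ℝ) = 0 * W by ring]
        apply Tendsto.mul_const
        have := tendsto_one_div_add_atTop_nhds_zero_nat (𝕜 := ℝ)
        simpa [one_div] using this
      exact hbase.comp hφ.tendsto_atTop
    have hT3 : Tendsto (fun k => L (φ k) * X (φ k) i ^ (m - 1)) atTop
        (𝓝 (lb * xb i ^ (m - 1))) := by
      apply Tendsto.mul hl_conv
      exact (((continuous_apply i).pow (m-1)).tendsto xb).comp hx_conv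
    have hT12 : Tendsto (fun k => tvp B (X (φ k)) i + ((φ k : ℝ)+1)⁻¹ *
        tvp (m := m) (n := n) (fun _ => (1:ℝ)) (X (φ k)) i) atTop (𝓝 (tvp B xb i)) := by
      simpa using hT1.add hT2
    have hsame : (fun k => tvp B (X (φ k)) i + ((φ k : ℝ)+1)⁻¹ *
        tvp (m := m) (n := n) (fun _ => (1:ℝ)) (X (φ k)) i)
        = fun k => L (φ k) * X (φ k) i ^ (m - 1) := funext fun k => hkey (φ k) i
    rw [hsame] at hT12
    exact tendsto_nhds_unique hT12 hT3
  exact ⟨lb, xb, hmemQ.2.1, hmemQ.1.1, hmemQ.1.2, heqb⟩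

lemma tvpC_ofReal (B : (Fin m → Fin n) → ℝ) (x : Fin n → ℝ) (i : Fin n) :
    tvpC B (fun l => (x l : ℂ)) i = ((tvp B x i : ℝ) : ℂ) := by
  unfold tvpC tvp
  rw [Complex.ofReal_sum]
  apply Finset.sum_congr rfl
  intro g _
  split
  · rw [Complex.ofReal_mul, Complex.ofReal_prod]
  · simp

lemma bddAbove_tEigSet (B : (Fin m → Fin n) → ℝ) (hm : 2 ≤ m) :
    BddAbove {r : ℝ | ∃ lam : ℂ, tEig B lam ∧ r = ‖lam‖} := by
  refine ⟨∑ g : Fin m → Fin n, |B g|, ?_⟩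
  rintro r ⟨lam, ⟨x, hx0, hxe⟩, rfl⟩
  have hex : ∃ l, x l ≠ 0 := by
    by_contra hcon
    push_neg at hcon
    exact hx0 (funext hcon)
  obtain ⟨i1, hi1⟩ := hex
  obtain ⟨i0, -, hmax⟩ := Finset.exists_max_image Finset.univ
    (fun l => ‖x l‖) ⟨i1, Finset.mem_univ i1⟩
  have hxi0 : 0 < ‖x i0‖ :=
    lt_of_lt_of_le (norm_pos_iff.mpr hi1) (hmax i1 (Finset.mem_univ i1))
  have habs : ‖lam‖ * ‖x i0‖ ^ (m - 1)
      = ‖tvpC B x i0‖ := by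
    rw [hxe i0, norm_mul, norm_pow]
  have hle : ‖tvpC B x i0‖
      ≤ (∑ g : Fin m → Fin n, |B g|) * ‖x i0‖ ^ (m - 1) := by
    rw [Finset.sum_mul]
    refine le_trans (norm_sum_le _ _) (Finset.sum_le_sum ?_)
    intro g _
    split
    · rw [norm_mul, Complex.norm_real, Real.norm_eq_abs, norm_prod]
      refine mul_le_mul (le_refl _) ?_ (Finset.prod_nonneg fun k _ => norm_nonneg _)
        (abs_nonneg _)
      calc ∏ k ∈ Finset.univ.erase (0 : Fin m), ‖x (g k)‖
          ≤ ∏ _k ∈ Finset.univ.erase (0 : Fin m), ‖x i0‖ :=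
            Finset.prod_le_prod (fun k _ => norm_nonneg _)
              (fun k _ => hmax (g k) (Finset.mem_univ _))
        _ = ‖x i0‖ ^ (m - 1) := by rw [Finset.prod_const, card_erase0]
    · simp only [norm_zero]
      positivity
  have := habs.le.trans hle
  exact le_of_mul_le_mul_right this (pow_pos hxi0 _)

lemma tRho_nonneg (B : (Fin m → Fin n) → ℝ) (hm : 2 ≤ m) : 0 ≤ tRho B := by
  rcases Set.eq_empty_or_nonempty
    {r : ℝ | ∃ lam : ℂ, tEig B lam ∧ r = ‖lam‖} with h | h
  · rw [tRho, h, Real.sSup_empty]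
  · obtain ⟨r, hr⟩ := h
    obtain ⟨lam, hlam, rfl⟩ := hr
    exact le_trans (norm_nonneg _)
      (le_csSup (bddAbove_tEigSet B hm) ⟨lam, hlam, rfl⟩)

end MTaux

open MTaux in
theorem stmt1 {m n : ℕ} [NeZero m] (hm : 2 ≤ m)
    (A : (Fin m → Fin n) → ℝ) (hA : isNonsingMTensor A) :
    isNonsingMMatrix (majMat A) := by
  classical
  obtain ⟨s, B, hB0, hrho, hAeq⟩ := hA
  have hmaj : majMat A = s • (1 : Matrix (Fin n) (Fin n) ℝ) - majMat B := by
    subst hAeq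
    ext i j
    have hidT : idT m n (fun k => if k = 0 then i else j) = if i = j then 1 else 0 := by
      by_cases hij : i = j
      · subst hij
        rw [if_pos rfl]
        apply if_pos
        intro k
        by_cases hk : k = 0 <;> simp [hk]
      · rw [if_neg hij]
        apply if_neg
        intro hall
        have h1 : j = i := by simpa [one_ne_zero' hm] using hall 1
        exact hij h1.symm
    simp only [majMat, Matrix.of_apply, Pi.sub_apply, Pi.smul_apply, smul_eq_mul,
      Matrix.sub_apply, Matrix.smul_apply, Matrix.one_apply, hidT]
  rcases Nat.eq_zero_or_pos n with hn0 | hn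
  · subst hn0
    refine ⟨1, 0, fun i j => le_refl 0, ?_, ?_⟩
    · have hset : {r : ℝ | ∃ lam, matEig (0 : Matrix (Fin 0) (Fin 0) ℝ) lam ∧
          r = ‖lam‖} = ∅ := by
        ext r
        simp only [Set.mem_setOf_eq, Set.mem_empty_iff_false, iff_false, not_exists]
        rintro lam ⟨⟨v, hv0, -⟩, -⟩
        exact hv0 (funext fun i => i.elim0)
      rw [matRho, hset, Real.sSup_empty]
      norm_num
    · ext i j
      exact i.elim0
  · have s0 : 0 < s := lt_of_le_of_lt (tRho_nonneg B hm) hrho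
    have hsemi : ∃ x : Fin n → ℝ, (∀ i, 0 < x i) ∧ ∀ i, tvp B x i < s * x i ^ (m - 1) := by
      by_contra hcon
      push_neg at hcon
      obtain ⟨lam, x, hslam, hxnn, hxsum, heq⟩ := pfLite hm hn B hB0 s hcon
      have hx0 : (fun l => (x l : ℂ)) ≠ 0 := by
        intro hzero
        have hz : ∀ l, x l = 0 := fun l => by
          have h := congrFun hzero l
          rw [Pi.zero_apply] at h
          exact_mod_cast h
        have h01 : (0:ℝ) = 1 := by
          rw [← hxsum]
          exact (Finset.sum_eq_zero (fun l _ => hz l)).symm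
        exact absurd h01 (by norm_num)
      have hteig : tEig B ((lam : ℂ)) := by
        refine ⟨fun l => (x l : ℂ), hx0, fun i => ?_⟩
        rw [tvpC_ofReal, heq i]
        push_cast
        ring
      have hmem : lam ∈ {r : ℝ | ∃ lamc : ℂ, tEig B lamc ∧ r = ‖lamc‖} := by
        refine ⟨(lam : ℂ), hteig, ?_⟩
        rw [Complex.norm_real, Real.norm_eq_abs, abs_of_pos (lt_of_lt_of_le s0 hslam)]
      have hle := le_csSup (bddAbove_tEigSet B hm) hmem
      exact absurd (lt_of_le_of_lt (hslam.trans hle) hrho) (lt_irrefl s)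
    obtain ⟨x, hxpos, hxlt⟩ := hsemi
    haveI : NeZero n := ⟨hn.ne'⟩
    have hne : (Finset.univ : Finset (Fin n)).Nonempty := Finset.univ_nonempty
    set N : Matrix (Fin n) (Fin n) ℝ := majMat B with hNdef
    have hN0 : ∀ i j, 0 ≤ N i j := fun i j => hB0 _
    set w : Fin n → ℝ := fun l => x l ^ (m - 1) with hwdef
    have hwpos : ∀ l, 0 < w l := fun l => pow_pos (hxpos l) _
    have hkey : ∀ i, ∑ j, N i j * w j ≤ tvp B x i := by
      intro i
      have hinj : Function.Injective (phi (m := m) i) := phi_injective hm i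
      have hsum_eq : ∑ j, N i j * w j
          = ∑ g ∈ Finset.univ.image (phi (m := m) i),
            (if g 0 = i then B g * ∏ k ∈ Finset.univ.erase 0, x (g k) else 0) := by
        rw [Finset.sum_image (fun a _ b _ h => hinj h)]
        apply Finset.sum_congr rfl
        intro j _
        rw [if_pos (phi_zero i j), prod_phi]
        rfl
      rw [hsum_eq]
      exact Finset.sum_le_sum_of_subset_of_nonneg (Finset.subset_univ _)
        (fun g _ _ => tvp_term_nonneg B hB0 x (fun l => (hxpos l).le) i g)
    set rstar : ℝ := Finset.univ.sup' hne (fun i => (∑ j, N i j * w j) / w i) with hrdef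
    have hratio_nn : ∀ i, 0 ≤ (∑ j, N i j * w j) / w i := fun i =>
      div_nonneg (Finset.sum_nonneg fun j _ => mul_nonneg (hN0 i j) (hwpos j).le) (hwpos i).le
    have hr0 : 0 ≤ rstar :=
      le_trans (hratio_nn 0)
        (Finset.le_sup' (fun i => (∑ j, N i j * w j) / w i) (Finset.mem_univ (0 : Fin n)))
    have hrs : rstar < s := by
      rw [hrdef, Finset.sup'_lt_iff hne]
      intro i _
      rw [div_lt_iff₀ (hwpos i)]
      calc (∑ j, N i j * w j) ≤ tvp B x i := hkey i
        _ < s * x i ^ (m-1) := hxlt i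
        _ = s * w i := rfl
    have hNw : ∀ i, ∑ j, N i j * w j ≤ rstar * w i := by
      intro i
      have h := Finset.le_sup' (fun i => (∑ j, N i j * w j) / w i) (Finset.mem_univ i)
      rwa [div_le_iff₀ (hwpos i)] at h
    have hbound : ∀ lam : ℂ, matEig N lam → ‖lam‖ ≤ rstar := by
      rintro lam ⟨v, hv0, hveq⟩
      have hex : ∃ l, v l ≠ 0 := by
        by_contra hcon'
        push_neg at hcon'
        exact hv0 (funext hcon')
      obtain ⟨l1, hl1⟩ := hex
      obtain ⟨i0, -, hmax⟩ := Finset.exists_max_image Finset.univ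
        (fun l => ‖v l‖ / w l) ⟨l1, Finset.mem_univ l1⟩
      set c : ℝ := ‖v i0‖ / w i0 with hcdef
      have hc_pos : 0 < c :=
        lt_of_lt_of_le (div_pos (norm_pos_iff.mpr hl1) (hwpos l1))
          (hmax l1 (Finset.mem_univ l1))
      have hvc : ∀ l, ‖v l‖ ≤ c * w l := fun l =>
        (div_le_iff₀ (hwpos l)).mp (hmax l (Finset.mem_univ l))
      have hvio : ‖v i0‖ = c * w i0 := by
        rw [hcdef, div_mul_cancel₀ _ (hwpos i0).ne']
      have heig0 : (∑ j, (N i0 j : ℂ) * v j) = lam * v i0 := by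
        have h := congrFun hveq i0
        simpa [Matrix.mulVec, dotProduct, Matrix.map_apply] using h
      have habs : ‖lam‖ * ‖v i0‖ ≤ rstar * (c * w i0) := by
        calc ‖lam‖ * ‖v i0‖
            = ‖∑ j, (N i0 j : ℂ) * v j‖ := by rw [heig0, norm_mul]
          _ ≤ ∑ j, ‖(N i0 j : ℂ) * v j‖ := norm_sum_le _ _
          _ = ∑ j, N i0 j * ‖v j‖ := by
              apply Finset.sum_congr rfl
              intro j _
              rw [norm_mul, Complex.norm_real, Real.norm_eq_abs, abs_of_nonneg (hN0 i0 j)]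
          _ ≤ ∑ j, N i0 j * (c * w j) := Finset.sum_le_sum fun j _ =>
              mul_le_mul_of_nonneg_left (hvc j) (hN0 i0 j)
          _ = c * ∑ j, N i0 j * w j := by
              rw [Finset.mul_sum]
              apply Finset.sum_congr rfl
              intro j _
              ring
          _ ≤ c * (rstar * w i0) := mul_le_mul_of_nonneg_left (hNw i0) hc_pos.le
          _ = rstar * (c * w i0) := by ring
      rw [hvio] at habs
      exact le_of_mul_le_mul_right habs (mul_pos hc_pos (hwpos i0))
    have hmatrho : matRho N < s := by
      apply lt_of_le_of_lt _ hrs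
      apply Real.sSup_le _ hr0
      rintro r ⟨lam, hlam, rfl⟩
      exact hbound lam hlam
    exact ⟨s, N, hN0, hmatrho, hmaj⟩
end

section
/- A tensor A of order m and dimension n has a unique 2nd-order left inverse (a matrix P with P A = I in the sense of matrix-tensor product equal to the identity tensor) if and only if A is row diagonal and its majorization matrix M(A) is nonsingular; in that case the left inverse is M(A)^{-1}. -/
open Finset Matrix

theorem stmt3 {m n : ℕ} [NeZero m] (hm : 2 ≤ m) (A : (Fin m → Fin n) → ℝ) :
    ((∃! P : Matrix (Fin n) (Fin n) ℝ, matTen P A = idT m n) ↔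
      (rowDiag A ∧ IsUnit (majMat A))) ∧
    (rowDiag A → IsUnit (majMat A) → matTen (majMat A)⁻¹ A = idT m n) := by
  have hone : (1:ℕ) < m := hm
  set o : Fin m := ⟨1, hone⟩ with ho
  have ho0 : o ≠ 0 := by
    simp [ho, Fin.ext_iff]
  have L1 : ∀ P : Matrix (Fin n) (Fin n) ℝ, matTen P A = idT m n → P * majMat A = 1 := by
    intro P hP
    ext i t
    have h := congrFun hP (fun k : Fin m => if k = 0 then i else t)
    have hup : ∀ j : Fin n, Function.update (fun k : Fin m => if k = 0 then i else t) 0 j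
        = fun k : Fin m => if k = 0 then j else t := by
      intro j; funext k
      rcases eq_or_ne k 0 with hk | hk <;> simp [Function.update, hk]
    simp only [matTen, hup, idT, eq_self_iff_true, if_true] at h
    have lhs : (P * majMat A) i t = ∑ j, P i j * A (fun k : Fin m => if k = 0 then j else t) := by
      simp [Matrix.mul_apply, majMat]
    rw [lhs, h]
    by_cases hit : i = t
    · subst hit
      simp [Matrix.one_apply]
    · rw [Matrix.one_apply_ne hit, if_neg]
      intro hall
      have h1 := hall o
      rw [if_neg ho0] at h1
      exact hit h1.symm
  have L2 : ∀ P : Matrix (Fin n) (Fin n) ℝ, matTen P A = idT m n → rowDiag A := by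
    intro P hP
    have hPM := L1 P hP
    have hMP : majMat A * P = 1 := mul_eq_one_comm.mp hPM
    intro g hg
    obtain ⟨k, l, hk, hl, hkl⟩ := hg
    set v : Fin n → ℝ := fun j => A (Function.update g 0 j) with hv
    have hPv : P *ᵥ v = 0 := by
      funext i
      have h := congrFun hP (Function.update g 0 i)
      have hupd : ∀ j : Fin n, Function.update (Function.update g 0 i) 0 j
          = Function.update g 0 j := by
        intro j; rw [Function.update_idem]
      simp only [matTen, hupd, Function.update_self] at h
      have hzero : idT m n (Function.update g 0 i) = 0 := by
        rw [idT, if_neg]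
        intro hall
        apply hkl
        have h1 := hall k
        have h2 := hall l
        rw [Function.update_of_ne hk] at h1
        rw [Function.update_of_ne hl] at h2
        rw [h1, h2]
      rw [hzero] at h
      simpa [Matrix.mulVec, dotProduct, hv] using h
    have hv0 : v = 0 := by
      have h2 : majMat A *ᵥ (P *ᵥ v) = majMat A *ᵥ 0 := by rw [hPv]
      rwa [Matrix.mulVec_mulVec, hMP, Matrix.one_mulVec, Matrix.mulVec_zero] at h2
    have hg0 : Function.update g 0 (g 0) = g := Function.update_eq_self 0 g
    calc A g = v (g 0) := by rw [hv]; simp [hg0]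
    _ = 0 := by rw [hv0]; rfl
  have L3 : rowDiag A → IsUnit (majMat A) → matTen (majMat A)⁻¹ A = idT m n := by
    intro hrd hu
    have hdet : IsUnit (majMat A).det := (Matrix.isUnit_iff_isUnit_det _).mp hu
    have hinv : (majMat A)⁻¹ * majMat A = 1 := Matrix.nonsing_inv_mul _ hdet
    funext g
    by_cases hc : ∀ k : Fin m, k ≠ 0 → g k = g o
    · have hup : ∀ j, A (Function.update g 0 j) = majMat A j (g o) := by
        intro j
        have : Function.update g 0 j = fun k : Fin m => if k = 0 then j else g o := by
          funext k
          rcases eq_or_ne k 0 with hk | hk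
          · subst hk; simp [Function.update]
          · rw [Function.update_of_ne hk, if_neg hk, hc k hk]
        rw [this]; rfl
      have key : matTen (majMat A)⁻¹ A g = ((majMat A)⁻¹ * majMat A) (g 0) (g o) := by
        rw [matTen, Matrix.mul_apply]
        exact Finset.sum_congr rfl fun j _ => by rw [hup]
      rw [key, hinv, idT, Matrix.one_apply]
      by_cases he : g 0 = g o
      · rw [if_pos he, if_pos]
        intro k
        rcases eq_or_ne k 0 with hk | hk
        · rw [hk]
        · rw [hc k hk, he]
      · rw [if_neg he, if_neg]
        intro hall
        exact he ((hall o).symm)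
    · push_neg at hc
      obtain ⟨k, hk, hkn⟩ := hc
      have hzero : ∀ j, A (Function.update g 0 j) = 0 := by
        intro j
        apply hrd
        refine ⟨k, o, hk, ho0, ?_⟩
        rwa [Function.update_of_ne hk, Function.update_of_ne ho0]
      rw [matTen]
      simp only [hzero, mul_zero]
      rw [Finset.sum_const_zero, idT, if_neg]
      intro hall
      exact hkn ((hall k).trans (hall o).symm)
  refine ⟨⟨fun h => ?_, fun h => ?_⟩, L3⟩
  · obtain ⟨P, hP, _⟩ := h
    have hrd := L2 P hP
    have hPM := L1 P hP
    have hdet : IsUnit (majMat A).det := Matrix.isUnit_det_of_left_inverse hPM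
    exact ⟨hrd, (Matrix.isUnit_iff_isUnit_det _).mpr hdet⟩
  · obtain ⟨hrd, hu⟩ := h
    refine ⟨(majMat A)⁻¹, L3 hrd hu, ?_⟩
    intro Q hQ
    exact (Matrix.inv_eq_left_inv (L1 Q hQ)).symm
end

section
/- Let A be a nonsingular M-tensor. Then the splitting A = M(A) I - F, where F := M(A) I - A, is a regular splitting: F ≥ 0 entrywise, M(A) I is row diagonal and left-nonsingular, and M(A)^{-1} ≥ 0 entrywise. -/
open Finset Matrix

namespace Aux

variable {m n : ℕ} [NeZero m]



lemma erase_card : (Finset.univ.erase (0 : Fin m)).card = m - 1 := by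
  rw [Finset.card_erase_of_mem (Finset.mem_univ _), Finset.card_univ, Fintype.card_fin]

/-- the index 1 of `Fin m`, for `2 ≤ m`. -/
def f1 (hm : 2 ≤ m) : Fin m := ⟨1, by omega⟩

lemma f1_ne (hm : 2 ≤ m) : f1 hm ≠ 0 := by
  have : (0 : Fin m) = ⟨0, Nat.pos_of_ne_zero (NeZero.ne m)⟩ := rfl
  simp [f1, Fin.ext_iff]

/-- the "diagonal" index function. -/
def dg (hm : 2 ≤ m) (i j : Fin n) : Fin m → Fin n := fun k => if k = 0 then i else j

lemma dg_zero (hm : 2 ≤ m) (i j : Fin n) : dg hm i j 0 = i := by simp [dg]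

lemma dg_inj (hm : 2 ≤ m) (i : Fin n) : Function.Injective (fun j => dg hm i j) := by
  intro a b hab
  have := congrFun hab (f1 hm)
  simpa [dg, f1_ne hm] using this

lemma dg_prod (hm : 2 ≤ m) (i j : Fin n) (x : Fin n → ℝ) :
    ∏ k ∈ Finset.univ.erase 0, x (dg hm i j k) = x j ^ (m - 1) := by
  have h : ∀ k ∈ Finset.univ.erase (0 : Fin m), x (dg hm i j k) = x j := fun k hk => by
    simp [dg, (Finset.mem_erase.mp hk).1]
  rw [Finset.prod_congr rfl h, Finset.prod_const, erase_card]

lemma tvp_nonneg {C : (Fin m → Fin n) → ℝ} (hC : ∀ g, 0 ≤ C g) {x : Fin n → ℝ}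
    (hx : ∀ j, 0 ≤ x j) (i : Fin n) : 0 ≤ tvp C x i := by
  refine Finset.sum_nonneg fun g _ => ?_
  split
  · exact mul_nonneg (hC g) (Finset.prod_nonneg fun k _ => hx _)
  · exact le_rfl

lemma tvp_mono {C : (Fin m → Fin n) → ℝ} (hC : ∀ g, 0 ≤ C g) {x y : Fin n → ℝ}
    (hx : ∀ j, 0 ≤ x j) (hxy : ∀ j, x j ≤ y j) (i : Fin n) : tvp C x i ≤ tvp C y i := by
  refine Finset.sum_le_sum fun g _ => ?_
  split
  · exact mul_le_mul_of_nonneg_left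
      (Finset.prod_le_prod (fun k _ => hx _) (fun k _ => hxy _)) (hC g)
  · exact le_rfl

lemma tvp_smul (C : (Fin m → Fin n) → ℝ) (t : ℝ) (x : Fin n → ℝ) (i : Fin n) :
    tvp C (t • x) i = t ^ (m - 1) * tvp C x i := by
  unfold tvp
  rw [Finset.mul_sum]
  refine Finset.sum_congr rfl fun g _ => ?_
  split
  · rw [show ∏ k ∈ Finset.univ.erase 0, (t • x) (g k)
        = t ^ (m-1) * ∏ k ∈ Finset.univ.erase 0, x (g k) by
      simp only [Pi.smul_apply, smul_eq_mul]
      rw [Finset.prod_mul_distrib, Finset.prod_const, erase_card]]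
    ring
  · simp

lemma tvp_add (C D : (Fin m → Fin n) → ℝ) (x : Fin n → ℝ) (i : Fin n) :
    tvp (fun g => C g + D g) x i = tvp C x i + tvp D x i := by
  unfold tvp
  rw [← Finset.sum_add_distrib]
  refine Finset.sum_congr rfl fun g _ => ?_
  split
  · ring
  · simp

lemma tvp_continuous (C : (Fin m → Fin n) → ℝ) (i : Fin n) :
    Continuous fun x : Fin n → ℝ => tvp C x i := by
  refine continuous_finset_sum _ fun g _ => ?_
  by_cases h : g 0 = i
  · simp only [h, if_true]
    exact continuous_const.mul (continuous_finset_prod _ fun k _ => continuous_apply _)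
  · simp only [h, if_false]
    exact continuous_const

lemma single_le_tvp {C : (Fin m → Fin n) → ℝ} (hC : ∀ g, 0 ≤ C g) {x : Fin n → ℝ}
    (hx : ∀ j, 0 ≤ x j) {i : Fin n} (g0 : Fin m → Fin n) (h0 : g0 0 = i) :
    C g0 * ∏ k ∈ Finset.univ.erase 0, x (g0 k) ≤ tvp C x i := by
  have hnn : ∀ g ∈ Finset.univ, 0 ≤ if g 0 = i then C g * ∏ k ∈ Finset.univ.erase 0, x (g k) else 0 := by
    intro g _
    split
    · exact mul_nonneg (hC g) (Finset.prod_nonneg fun k _ => hx _)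
    · exact le_rfl
  have := Finset.single_le_sum hnn (Finset.mem_univ g0)
  simpa [h0, tvp] using this

lemma tvp_le_sum {C : (Fin m → Fin n) → ℝ} (hC : ∀ g, 0 ≤ C g) {x : Fin n → ℝ}
    (hx : ∀ j, 0 ≤ x j) (hx1 : ∀ j, x j ≤ 1) (i : Fin n) :
    tvp C x i ≤ ∑ g, C g := by
  refine Finset.sum_le_sum fun g _ => ?_
  split
  · have h1 := Finset.prod_le_one (s := Finset.univ.erase (0 : Fin m))
      (f := fun k => x (g k)) (fun k _ => hx _) (fun k _ => hx1 _)
    have := mul_le_mul_of_nonneg_left h1 (hC g)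
    simpa using this
  · exact hC g

lemma diag_le_tvp (hm : 2 ≤ m) {C : (Fin m → Fin n) → ℝ} (hC : ∀ g, 0 ≤ C g) {x : Fin n → ℝ}
    (hx : ∀ j, 0 ≤ x j) (i : Fin n) :
    ∑ j, C (dg hm i j) * x j ^ (m - 1) ≤ tvp C x i := by
  classical
  unfold tvp
  set f : (Fin m → Fin n) → ℝ := fun g => if g 0 = i then C g * ∏ k ∈ Finset.univ.erase 0, x (g k) else 0 with hfdef
  have hf : ∀ g, 0 ≤ f g := fun g => by
    simp only [hfdef]
    split
    · exact mul_nonneg (hC g) (Finset.prod_nonneg fun k _ => hx _)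
    · exact le_rfl
  have h1 : ∑ j, C (dg hm i j) * x j ^ (m - 1) = ∑ j, f (dg hm i j) := by
    refine Finset.sum_congr rfl fun j _ => ?_
    simp only [hfdef, dg_zero hm, if_true, dg_prod hm]
  have himg : ∑ g ∈ Finset.univ.image (fun j => dg hm i j), f g = ∑ j, f (dg hm i j) :=
    Finset.sum_image (fun a _ b _ h => dg_inj hm i h)
  rw [h1, ← himg]
  exact Finset.sum_le_sum_of_subset_of_nonneg (Finset.subset_univ _) fun g _ _ => hf g

lemma tvp_update_le (hm : 2 ≤ m) {C : (Fin m → Fin n) → ℝ} (hC : ∀ g, 0 ≤ C g) {x : Fin n → ℝ}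
    (hx : ∀ j, 0 ≤ x j) {i0 : Fin n} {v : ℝ} (hv0 : 0 ≤ v) (hv : v ≤ x i0) (j : Fin n) :
    tvp C (Function.update x i0 v) j ≤ tvp C x j - C (dg hm j i0) * (x i0 ^ (m-1) - v ^ (m-1)) := by
  classical
  set x' := Function.update x i0 v with hx'
  have hx'0 : ∀ a, 0 ≤ x' a := by
    intro a; by_cases h : a = i0 <;> simp [hx', h, Function.update, hv0, hx a]
  have hx'le : ∀ a, x' a ≤ x a := by
    intro a; by_cases h : a = i0 <;> simp [hx', h, Function.update, hv, le_refl]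
  set f : (Fin m → Fin n) → ℝ := fun g =>
    (if g 0 = j then C g * ∏ k ∈ Finset.univ.erase 0, x (g k) else 0)
    - (if g 0 = j then C g * ∏ k ∈ Finset.univ.erase 0, x' (g k) else 0) with hf
  have hfnn : ∀ g, 0 ≤ f g := by
    intro g
    simp only [f]
    split
    · refine sub_nonneg.mpr (mul_le_mul_of_nonneg_left
        (Finset.prod_le_prod (fun k _ => hx'0 _) (fun k _ => hx'le _)) (hC g))
    · simp
  have hsum : tvp C x j - tvp C x' j = ∑ g, f g := by
    simp only [f, tvp, Finset.sum_sub_distrib]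
  have hkey : C (dg hm j i0) * (x i0 ^ (m-1) - v ^ (m-1)) ≤ ∑ g, f g := by
    have hterm : f (dg hm j i0) = C (dg hm j i0) * (x i0 ^ (m-1) - v ^ (m-1)) := by
      simp only [f, dg_zero hm, if_true, dg_prod hm]
      have : x' i0 = v := Function.update_self _ _ _
      rw [this]; ring
    calc C (dg hm j i0) * (x i0 ^ (m-1) - v ^ (m-1)) = f (dg hm j i0) := hterm.symm
      _ ≤ ∑ g, f g := Finset.single_le_sum (fun g _ => hfnn g) (Finset.mem_univ _)
  linarith [hsum ▸ hkey]

-- chunk 2 : simplex facts and the existence lemma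


lemma simplex_le_one {x : Fin n → ℝ} (hx : x ∈ stdSimplex ℝ (Fin n)) (j : Fin n) : x j ≤ 1 := by
  have h := Finset.single_le_sum (f := fun a => x a) (fun a _ => hx.1 a) (Finset.mem_univ j)
  rw [hx.2] at h
  exact h

lemma simplex_exists_big (hn : 0 < n) {x : Fin n → ℝ} (hx : x ∈ stdSimplex ℝ (Fin n)) :
    ∃ jm, (1 : ℝ)/n ≤ x jm ∧ ∀ j, x j ≤ x jm := by
  haveI : Nonempty (Fin n) := ⟨⟨0, hn⟩⟩
  obtain ⟨jm, -, hjm⟩ := Finset.exists_max_image Finset.univ x Finset.univ_nonempty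
  refine ⟨jm, ?_, fun j => hjm j (Finset.mem_univ j)⟩
  have h1 : (1:ℝ) = ∑ j, x j := hx.2.symm
  have h2 : ∑ j, x j ≤ ∑ _j : Fin n, x jm := Finset.sum_le_sum fun j _ => hjm j (Finset.mem_univ j)
  rw [Finset.sum_const, Finset.card_univ, Fintype.card_fin, nsmul_eq_mul] at h2
  have hn' : (0:ℝ) < n := by exact_mod_cast hn
  rw [div_le_iff₀ hn']
  nlinarith

lemma tvp_lb (hm : 2 ≤ m) (hn : 0 < n) {C : (Fin m → Fin n) → ℝ} {ε : ℝ} (hε : 0 < ε)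
    (hCε : ∀ g, ε ≤ C g) {x : Fin n → ℝ} (hx : x ∈ stdSimplex ℝ (Fin n)) (i : Fin n) :
    ε * ((1:ℝ)/n) ^ (m-1) ≤ tvp C x i := by
  have hC0 : ∀ g, 0 ≤ C g := fun g => hε.le.trans (hCε g)
  obtain ⟨jm, hjm1, -⟩ := simplex_exists_big hn hx
  have h := single_le_tvp hC0 hx.1 (dg hm i jm) (dg_zero hm i jm)
  rw [dg_prod] at h
  have hn' : (0:ℝ) < n := by exact_mod_cast hn
  calc ε * ((1:ℝ)/n)^(m-1) ≤ C (dg hm i jm) * x jm ^ (m-1) := by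
        have h1 : ((1:ℝ)/n) ^ (m-1) ≤ x jm ^ (m-1) := pow_le_pow_left₀ (by positivity) hjm1 _
        exact mul_le_mul (hCε _) h1 (by positivity) (hC0 _)
    _ ≤ tvp C x i := h

set_option maxHeartbeats 1000000 in
lemma exists_eig_pos (hm : 2 ≤ m) (hn : 0 < n) {C : (Fin m → Fin n) → ℝ} {ε : ℝ} (hε : 0 < ε)
    (hCε : ∀ g, ε ≤ C g) :
    ∃ (lam : ℝ) (x : Fin n → ℝ), x ∈ stdSimplex ℝ (Fin n) ∧ (∀ i, 0 < x i) ∧ 0 < lam ∧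
      ∀ i, tvp C x i = lam * x i ^ (m - 1) := by
  classical
  haveI : Nonempty (Fin n) := ⟨⟨0, hn⟩⟩
  have hm1 : m - 1 ≠ 0 := by omega
  have hn' : (0:ℝ) < n := by exact_mod_cast hn
  have hC0 : ∀ g, 0 ≤ C g := fun g => hε.le.trans (hCε g)
  set δ : ℝ := ε * ((1:ℝ)/n) ^ (m-1) with hδdef
  have hδ : 0 < δ := by positivity
  set T : Set ℝ := {lam | ∃ x, x ∈ stdSimplex ℝ (Fin n) ∧ ∀ i, tvp C x i ≤ lam * x i ^ (m-1)}
    with hT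
  have hTlb : ∀ lam ∈ T, δ ≤ lam := by
    rintro lam ⟨x, hxΔ, hineq⟩
    obtain ⟨jm, hjm1, -⟩ := simplex_exists_big hn hxΔ
    have h1 : δ ≤ lam * x jm ^ (m-1) := le_trans (tvp_lb hm hn hε hCε hxΔ jm) (hineq jm)
    have hxle : x jm ^ (m-1) ≤ 1 := pow_le_one₀ (hxΔ.1 jm) (simplex_le_one hxΔ jm)
    have hxnn : 0 ≤ x jm ^ (m-1) := pow_nonneg (hxΔ.1 jm) _
    rcases le_or_gt lam 0 with hl | hl
    · have h2 := mul_nonpos_of_nonpos_of_nonneg hl hxnn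
      linarith
    · have h2 : lam * x jm ^ (m-1) ≤ lam * 1 := mul_le_mul_of_nonneg_left hxle hl.le
      rw [mul_one] at h2
      linarith
  have hTne : T.Nonempty := by
    refine ⟨(∑ g, C g) * (n:ℝ) ^ (m-1), fun _ => (1:ℝ)/n, ⟨fun i => by positivity, ?_⟩, ?_⟩
    · rw [Finset.sum_const, Finset.card_univ, Fintype.card_fin, nsmul_eq_mul]
      field_simp
    · intro i
      have h1 := tvp_le_sum hC0 (x := fun _ => (1:ℝ)/n) (fun j => by positivity)
        (fun j => by rw [div_le_one hn']; exact_mod_cast hn) i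
      have h2 : (∑ g, C g) * (n:ℝ) ^ (m-1) * ((1:ℝ)/n) ^ (m-1) = ∑ g, C g := by
        rw [mul_assoc, ← mul_pow, mul_one_div_cancel hn'.ne', one_pow, mul_one]
      calc tvp C (fun _ => (1:ℝ)/n) i ≤ ∑ g, C g := h1
        _ = (∑ g, C g) * (n:ℝ) ^ (m-1) * ((1:ℝ)/n) ^ (m-1) := h2.symm
  have hbdd : BddBelow T := ⟨δ, hTlb⟩
  set lam0 : ℝ := sInf T with hlam0def
  have hlam0δ : δ ≤ lam0 := le_csInf hTne hTlb
  have hlam0pos : 0 < lam0 := lt_of_lt_of_le hδ hlam0δ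
  have hseq : ∀ k : ℕ, ∃ lam ∈ T, lam < lam0 + 1/(k+1) := by
    intro k
    apply exists_lt_of_csInf_lt hTne
    have h0 : (0:ℝ) < 1/(k+1) := by positivity
    linarith
  choose lams hlamsT hlamslt using hseq
  choose xs hxsΔ hxsle using fun k => (hlamsT k)
  obtain ⟨x, hxΔ, φ, hφmono, hφtend⟩ := (isCompact_stdSimplex ℝ (Fin n)).tendsto_subseq hxsΔ
  have hlamtend : Filter.Tendsto (fun k => lams (φ k)) Filter.atTop (nhds lam0) := by
    have hub : ∀ k : ℕ, lams (φ k) ≤ lam0 + 1/(k+1) := by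
      intro k
      have h1 : ((k:ℝ)+1) ≤ ((φ k : ℕ):ℝ)+1 := by
        have h2 : k ≤ φ k := hφmono.le_apply
        have : (k:ℝ) ≤ (φ k : ℕ) := by exact_mod_cast h2
        linarith
      have h3 : 1/(((φ k : ℕ):ℝ)+1) ≤ 1/((k:ℝ)+1) :=
        one_div_le_one_div_of_le (by positivity) h1
      have h4 := (hlamslt (φ k)).le
      calc lams (φ k) ≤ lam0 + 1/((φ k : ℕ)+1 : ℝ) := by exact_mod_cast h4
        _ ≤ lam0 + 1/((k:ℝ)+1) := by linarith
    have hlb : ∀ k, lam0 ≤ lams (φ k) := fun k => csInf_le hbdd (hlamsT (φ k))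
    have h2 : Filter.Tendsto (fun k : ℕ => lam0 + 1/((k:ℝ)+1)) Filter.atTop (nhds lam0) := by
      have h3 : Filter.Tendsto (fun n : ℕ => 1 / ((n : ℝ) + 1)) Filter.atTop (nhds 0) :=
        tendsto_one_div_add_atTop_nhds_zero_nat
      simpa using tendsto_const_nhds.add h3
    exact tendsto_of_tendsto_of_tendsto_of_le_of_le tendsto_const_nhds h2 hlb hub
  have hxineq : ∀ i, tvp C x i ≤ lam0 * x i ^ (m-1) := by
    intro i
    have hL : Filter.Tendsto (fun k => tvp C (xs (φ k)) i) Filter.atTop (nhds (tvp C x i)) :=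
      ((tvp_continuous C i).tendsto x).comp hφtend
    have hR : Filter.Tendsto (fun k => lams (φ k) * (xs (φ k) i) ^ (m-1)) Filter.atTop
        (nhds (lam0 * x i ^ (m-1))) := by
      apply hlamtend.mul
      exact (((continuous_pow (m-1)).comp (continuous_apply i)).tendsto x).comp hφtend
    exact le_of_tendsto_of_tendsto' hL hR (fun k => hxsle (φ k) i)
  have hxpos : ∀ i, 0 < x i := by
    intro i
    have h1 : δ ≤ lam0 * x i ^ (m-1) := le_trans (tvp_lb hm hn hε hCε hxΔ i) (hxineq i)
    by_contra h
    push_neg at h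
    have hx0 : x i = 0 := le_antisymm h (hxΔ.1 i)
    rw [hx0, zero_pow hm1, mul_zero] at h1
    exact absurd h1 (not_le.mpr hδ)
  have heq : ∀ i, tvp C x i = lam0 * x i ^ (m-1) := by
    by_contra hne
    push_neg at hne
    obtain ⟨i0, hi0⟩ := hne
    have hi0lt : tvp C x i0 < lam0 * x i0 ^ (m-1) := lt_of_le_of_ne (hxineq i0) hi0
    set γ : ℝ := lam0 * x i0 ^ (m-1) - tvp C x i0 with hγdef
    have hγ : 0 < γ := sub_pos.mpr hi0lt
    set P : ℝ := lam0 * x i0 ^ (m-1) with hPdef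
    have hP : 0 < P := mul_pos hlam0pos (pow_pos (hxpos i0) _)
    set M1 : ℝ := ((m-1 : ℕ) : ℝ) with hM1def
    have hM1pos : (0:ℝ) < M1 := by
      rw [hM1def]; exact_mod_cast Nat.pos_of_ne_zero hm1
    set t : ℝ := min (1/2) (γ / (2 * P * M1)) with htdef
    have ht0 : 0 < t := lt_min (by norm_num) (div_pos hγ (by positivity))
    have ht2 : t ≤ 1/2 := min_le_left _ _
    have ht1 : t < 1 := lt_of_le_of_lt ht2 (by norm_num)
    have htP : P * (M1 * t) ≤ γ/2 := by
      have h1 : t ≤ γ / (2*P*M1) := min_le_right _ _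
      rw [le_div_iff₀ (by positivity)] at h1
      nlinarith
    have hbern : 1 - M1 * t ≤ (1 - t) ^ (m-1) := by
      have h := one_add_mul_le_pow (show (-2:ℝ) ≤ -t by linarith) (m-1)
      rw [show (1:ℝ) + -t = 1 - t by ring] at h
      calc 1 - M1*t = 1 + ((m-1:ℕ):ℝ) * (-t) := by rw [hM1def]; ring
        _ ≤ _ := h
    have hPdiff : P - P * (1-t)^(m-1) ≤ γ/2 := by
      have h1 : P * (1 - M1*t) ≤ P * (1-t)^(m-1) := mul_le_mul_of_nonneg_left hbern hP.le
      nlinarith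
    set v : ℝ := (1 - t) * x i0 with hvdef
    have hv0 : 0 ≤ v := mul_nonneg (by linarith) (hxpos i0).le
    have hvlt : v < x i0 := by nlinarith [hxpos i0]
    set x' := Function.update x i0 v with hx'def
    have hx'0 : ∀ a, 0 ≤ x' a := by
      intro a; by_cases h : a = i0
      · subst h; rw [hx'def, Function.update_self]; exact hv0
      · rw [hx'def, Function.update_of_ne h]; exact (hxpos a).le
    have hx'le : ∀ a, x' a ≤ x a := by
      intro a; by_cases h : a = i0
      · subst h; rw [hx'def, Function.update_self]; exact hvlt.le
      · rw [hx'def, Function.update_of_ne h]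
    have hx'pos : ∀ a, 0 < x' a := by
      intro a; by_cases h : a = i0
      · subst h; rw [hx'def, Function.update_self]
        exact mul_pos (by linarith) (hxpos _)
      · rw [hx'def, Function.update_of_ne h]; exact hxpos a
    set β : ℝ := x i0 ^ (m-1) - v ^ (m-1) with hβdef
    have hβpos : 0 < β := sub_pos.mpr (pow_lt_pow_left₀ hvlt hv0 hm1)
    set δ0 : ℝ := min (ε * β) (γ/2) with hδ0def
    have hδ0 : 0 < δ0 := lt_min (mul_pos hε hβpos) (by positivity)
    have hkey : ∀ j, tvp C x' j ≤ (lam0 - δ0) * x' j ^ (m-1) := by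
      intro j
      have hstep : tvp C x' j ≤ lam0 * x' j ^ (m-1) - δ0 := by
        by_cases hji : j = i0
        · subst hji
          have h1 : tvp C x' j ≤ tvp C x j := tvp_mono hC0 hx'0 hx'le j
          have h2 : x' j = v := by rw [hx'def, Function.update_self]
          rw [h2]
          have h3 : lam0 * v ^ (m-1) = P * (1-t)^(m-1) := by
            rw [hPdef, hvdef, mul_pow]; ring
          rw [h3]
          have h4 : δ0 ≤ γ/2 := min_le_right _ _
          have h5 : tvp C x j = P - γ := by rw [hPdef, hγdef]; ring
          linarith
        · have h1 := tvp_update_le hm hC0 (fun a => (hxpos a).le) hv0 hvlt.le j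
          have h2 : ε * β ≤ C (dg hm j i0) * β := mul_le_mul_of_nonneg_right (hCε _) hβpos.le
          have h3 : x' j = x j := by rw [hx'def, Function.update_of_ne hji]
          have h4 : δ0 ≤ ε * β := min_le_left _ _
          rw [h3]
          have h5 := hxineq j
          rw [← hx'def, ← hβdef] at h1
          linarith
      have hxle1 : x' j ^ (m-1) ≤ 1 :=
        pow_le_one₀ (hx'0 j) (le_trans (hx'le j) (simplex_le_one hxΔ j))
      have hxnn : 0 ≤ x' j ^ (m-1) := pow_nonneg (hx'0 j) _
      nlinarith
    set c : ℝ := ∑ j, x' j with hcdef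
    have hcpos : 0 < c := Finset.sum_pos (fun j _ => hx'pos j) Finset.univ_nonempty
    have hmem : (lam0 - δ0) ∈ T := by
      refine ⟨c⁻¹ • x', ⟨fun i => mul_nonneg (inv_nonneg.mpr hcpos.le) (hx'0 i), ?_⟩, ?_⟩
      · simp only [Pi.smul_apply, smul_eq_mul, ← Finset.mul_sum, ← hcdef]
        exact inv_mul_cancel₀ hcpos.ne'
      · intro i
        rw [tvp_smul]
        have h1 := hkey i
        have h2 : (c⁻¹)^(m-1) * tvp C x' i ≤ (c⁻¹)^(m-1) * ((lam0-δ0) * x' i ^ (m-1)) :=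
          mul_le_mul_of_nonneg_left h1 (by positivity)
        have h3 : (lam0 - δ0) * ((c⁻¹ • x') i) ^ (m-1) = (c⁻¹)^(m-1) * ((lam0-δ0) * x' i ^(m-1)) := by
          simp only [Pi.smul_apply, smul_eq_mul, mul_pow]; ring
        rw [h3]
        exact h2
    have hfinal := csInf_le hbdd hmem
    rw [← hlam0def] at hfinal
    linarith
  exact ⟨lam0, x, hxΔ, hxpos, hlam0pos, heq⟩

-- chunk 3: limit lemma, complexification, tRho facts

lemma tvp_tsmul (a : ℝ) (C : (Fin m → Fin n) → ℝ) (x : Fin n → ℝ) (i : Fin n) :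
    tvp (fun g => a * C g) x i = a * tvp C x i := by
  unfold tvp
  rw [Finset.mul_sum]
  refine Finset.sum_congr rfl fun g _ => ?_
  split
  · ring
  · simp

lemma tvp_split (a : ℝ) (B : (Fin m → Fin n) → ℝ) (x : Fin n → ℝ) (i : Fin n) :
    tvp (fun g => B g + a) x i = tvp B x i + a * tvp (fun _ : Fin m → Fin n => (1:ℝ)) x i := by
  have h1 : (fun g : Fin m → Fin n => B g + a) = fun g => B g + (fun _ : Fin m → Fin n => a) g := rfl
  rw [h1, tvp_add]
  congr 1
  have h2 : (fun _ : Fin m → Fin n => a) = fun g => a * (fun _ : Fin m → Fin n => (1:ℝ)) g := by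
    funext g; ring
  rw [h2, tvp_tsmul]

lemma eig_limit (hm : 2 ≤ m) (hn : 0 < n) {B : (Fin m → Fin n) → ℝ}
    {lams : ℕ → ℝ} {xs : ℕ → Fin n → ℝ} {σ Λ : ℝ}
    (hxs : ∀ k, xs k ∈ stdSimplex ℝ (Fin n))
    (hl : ∀ k, σ ≤ lams k) (hL : ∀ k, lams k ≤ Λ)
    (heig : ∀ (k : ℕ) i, tvp (fun g => B g + 1/((k:ℝ)+1)) (xs k) i = lams k * xs k i ^ (m-1)) :
    ∃ (lam : ℝ) (x : Fin n → ℝ), x ∈ stdSimplex ℝ (Fin n) ∧ σ ≤ lam ∧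
      ∀ i, tvp B x i = lam * x i ^ (m-1) := by
  classical
  obtain ⟨x, hxΔ, φ, hφmono, hφtend⟩ := (isCompact_stdSimplex ℝ (Fin n)).tendsto_subseq hxs
  obtain ⟨lam, hlamIcc', ψ, hψmono, hψtend⟩ :=
    (isCompact_Icc (a := σ) (b := Λ)).tendsto_subseq
      (x := fun k => lams (φ k)) (fun k => ⟨hl (φ k), hL (φ k)⟩)
  have hxtend : Filter.Tendsto (fun k => xs (φ (ψ k))) Filter.atTop (nhds x) :=
    hφtend.comp hψmono.tendsto_atTop
  refine ⟨lam, x, hxΔ, hlamIcc'.1, fun i => ?_⟩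
  have hL1 : Filter.Tendsto (fun k => tvp B (xs (φ (ψ k))) i) Filter.atTop
      (nhds (tvp B x i)) := ((tvp_continuous B i).tendsto x).comp hxtend
  have hJ : Filter.Tendsto (fun k => tvp (fun _ : Fin m → Fin n => (1:ℝ)) (xs (φ (ψ k))) i) Filter.atTop
      (nhds (tvp (fun _ : Fin m → Fin n => (1:ℝ)) x i)) :=
    ((tvp_continuous (fun _ : Fin m → Fin n => (1:ℝ)) i).tendsto x).comp hxtend
  have hεtend : Filter.Tendsto (fun k : ℕ => 1/(((φ (ψ k) : ℕ):ℝ)+1)) Filter.atTop (nhds 0) := by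
    have hmono : StrictMono (fun k => φ (ψ k)) := hφmono.comp hψmono
    have h1 : ∀ k : ℕ, 0 ≤ 1/(((φ (ψ k) : ℕ):ℝ)+1) := fun k => by positivity
    have h2 : ∀ k : ℕ, 1/(((φ (ψ k) : ℕ):ℝ)+1) ≤ 1/((k:ℝ)+1) := by
      intro k
      apply one_div_le_one_div_of_le (by positivity)
      have h3 := hmono.le_apply (x := k)
      have h4 : (k:ℝ) ≤ ((φ (ψ k) : ℕ):ℝ) := by exact_mod_cast h3
      linarith
    exact tendsto_of_tendsto_of_tendsto_of_le_of_le tendsto_const_nhds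
      tendsto_one_div_add_atTop_nhds_zero_nat h1 h2
  have hLHS : Filter.Tendsto
      (fun k => tvp B (xs (φ (ψ k))) i
        + (1/(((φ (ψ k) : ℕ):ℝ)+1)) * tvp (fun _ : Fin m → Fin n => (1:ℝ)) (xs (φ (ψ k))) i)
      Filter.atTop (nhds (tvp B x i)) := by
    have := hL1.add (hεtend.mul hJ)
    simpa using this
  have hRHS : Filter.Tendsto (fun k => lams (φ (ψ k)) * (xs (φ (ψ k)) i) ^ (m-1)) Filter.atTop
      (nhds (lam * x i ^ (m-1))) := by
    apply hψtend.mul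
    exact (((continuous_pow (m-1)).comp (continuous_apply i)).tendsto x).comp hxtend
  have hEq : ∀ k, tvp B (xs (φ (ψ k))) i
      + (1/(((φ (ψ k) : ℕ):ℝ)+1)) * tvp (fun _ : Fin m → Fin n => (1:ℝ)) (xs (φ (ψ k))) i
      = lams (φ (ψ k)) * (xs (φ (ψ k)) i) ^ (m-1) := by
    intro k
    rw [← tvp_split]
    exact heig (φ (ψ k)) i
  have := tendsto_nhds_unique (hLHS.congr hEq) hRHS
  exact this

lemma tvpC_real (B : (Fin m → Fin n) → ℝ) (x : Fin n → ℝ) (i : Fin n) :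
    tvpC B (fun j => (x j : ℂ)) i = ((tvp B x i : ℝ) : ℂ) := by
  unfold tvp tvpC
  rw [Complex.ofReal_sum]
  refine Finset.sum_congr rfl fun g _ => ?_
  split
  · push_cast
    rfl
  · simp

lemma eig_le_sum {B : (Fin m → Fin n) → ℝ} (hB : ∀ g, 0 ≤ B g) {lam : ℂ}
    (h : tEig B lam) : ‖lam‖ ≤ ∑ g, B g := by
  obtain ⟨x, hx0, hx⟩ := h
  have hex : ∃ j, x j ≠ 0 := by
    by_contra h'
    push_neg at h'
    exact hx0 (funext fun j => h' j)
  obtain ⟨j1, hj1⟩ := hex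
  haveI : Nonempty (Fin n) := ⟨j1⟩
  obtain ⟨i0, -, hi0⟩ := Finset.exists_max_image Finset.univ (fun j => ‖x j‖)
    Finset.univ_nonempty
  have hM : 0 < ‖x i0‖ :=
    lt_of_lt_of_le (by simpa using hj1) (hi0 j1 (Finset.mem_univ j1))
  set M : ℝ := ‖x i0‖ with hMdef
  have hbound : ‖tvpC B x i0‖ ≤ (∑ g, B g) * M ^ (m-1) := by
    unfold tvpC
    calc ‖(∑ g : Fin m → Fin n,
          if g 0 = i0 then (B g : ℂ) * ∏ k ∈ Finset.univ.erase 0, x (g k) else 0)‖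
        ≤ ∑ g : Fin m → Fin n, ‖
          (if g 0 = i0 then (B g : ℂ) * ∏ k ∈ Finset.univ.erase 0, x (g k) else 0)‖ := by
          exact norm_sum_le _ _
      _ ≤ ∑ g : Fin m → Fin n, B g * M ^ (m-1) := by
          refine Finset.sum_le_sum fun g _ => ?_
          split
          · rw [norm_mul]
            have h1 : ‖((B g : ℂ))‖ = B g := by
              rw [Complex.norm_real, Real.norm_of_nonneg (hB g)]
            rw [h1, norm_prod]
            refine mul_le_mul_of_nonneg_left ?_ (hB g)
            calc ∏ k ∈ Finset.univ.erase 0, ‖x (g k)‖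
                ≤ ∏ k ∈ Finset.univ.erase (0 : Fin m), M := by
                  refine Finset.prod_le_prod (fun k _ => norm_nonneg _)
                    (fun k _ => hi0 _ (Finset.mem_univ _))
              _ = M ^ (m-1) := by rw [Finset.prod_const, erase_card]
          · simp only [norm_zero]
            exact mul_nonneg (hB g) (pow_nonneg hM.le _)
      _ = (∑ g, B g) * M ^ (m-1) := by rw [← Finset.sum_mul]
  have heq : ‖tvpC B x i0‖ = ‖lam‖ * M ^ (m-1) := by
    rw [hx i0, norm_mul, norm_pow, hMdef]
  rw [heq] at hbound
  have hMp : 0 < M ^ (m-1) := pow_pos hM _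
  exact le_of_mul_le_mul_right hbound hMp

lemma tRho_nonneg (B : (Fin m → Fin n) → ℝ) : 0 ≤ tRho B :=
  Real.sSup_nonneg (by rintro r ⟨lam, -, rfl⟩; exact norm_nonneg lam)

lemma le_tRho (hm : 2 ≤ m) (hn : 0 < n) {B : (Fin m → Fin n) → ℝ} (hB : ∀ g, 0 ≤ B g)
    {lam : ℝ} {x : Fin n → ℝ} (hxΔ : x ∈ stdSimplex ℝ (Fin n)) (hlam : 0 ≤ lam)
    (heig : ∀ i, tvp B x i = lam * x i ^ (m-1)) : lam ≤ tRho B := by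
  have hx0 : (fun j => ((x j : ℝ) : ℂ)) ≠ 0 := by
    intro h
    have h1 : ∀ j, x j = 0 := by
      intro j
      have := congrFun h j
      simpa using this
    have h2 : (∑ j, x j) = 0 := Finset.sum_eq_zero fun j _ => h1 j
    rw [hxΔ.2] at h2
    norm_num at h2
  have hEig : tEig B (lam : ℂ) := by
    refine ⟨fun j => (x j : ℂ), hx0, fun i => ?_⟩
    rw [tvpC_real, heig i]
    push_cast
    ring
  have hmem : lam ∈ {r : ℝ | ∃ l : ℂ, tEig B l ∧ r = ‖l‖} := by
    refine ⟨(lam : ℂ), hEig, ?_⟩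
    rw [Complex.norm_real, Real.norm_of_nonneg hlam]
  exact le_csSup ⟨∑ g, B g, by rintro r ⟨l, hl, rfl⟩; exact eig_le_sum hB hl⟩ hmem

lemma majMat_apply_dg (hm : 2 ≤ m) (B : (Fin m → Fin n) → ℝ) (i j : Fin n) :
    majMat B i j = B (dg hm i j) := rfl

lemma cw_low (hm : 2 ≤ m) {C : (Fin m → Fin n) → ℝ} (hC : ∀ g, 0 ≤ C g)
    {lam : ℝ} {x : Fin n → ℝ} (hx : ∀ i, 0 < x i)
    (heig : ∀ i, tvp C x i = lam * x i ^ (m-1))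
    {σ : ℝ} {u : Fin n → ℝ} (hu0 : ∀ i, 0 ≤ u i) {j1 : Fin n} (huj : 0 < u j1)
    (hu : ∀ i, σ * u i ^ (m-1) ≤ tvp C u i) : σ ≤ lam := by
  classical
  haveI : Nonempty (Fin n) := ⟨j1⟩
  obtain ⟨j0, -, hj0⟩ := Finset.exists_max_image Finset.univ (fun j => u j / x j)
    Finset.univ_nonempty
  set t : ℝ := u j0 / x j0 with htdef
  have ht : 0 < t := lt_of_lt_of_le (div_pos huj (hx j1)) (hj0 j1 (Finset.mem_univ _))
  have htu : ∀ j, u j ≤ t * x j := by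
    intro j
    have h1 : u j / x j ≤ t := hj0 j (Finset.mem_univ j)
    rw [div_le_iff₀ (hx j)] at h1
    linarith
  have h2 : σ * u j0 ^ (m-1) ≤ tvp C u j0 := hu j0
  have h3 : tvp C u j0 ≤ tvp C (t • x) j0 :=
    tvp_mono hC hu0 (fun j => by simpa [smul_eq_mul] using htu j) j0
  rw [tvp_smul, heig j0] at h3
  have h4 : u j0 = t * x j0 := by rw [htdef, div_mul_cancel₀ _ (hx j0).ne']
  have h5 : 0 < t ^ (m-1) * x j0 ^ (m-1) := mul_pos (pow_pos ht _) (pow_pos (hx j0) _)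
  have hchain : σ * (t ^ (m-1) * x j0 ^ (m-1)) ≤ lam * (t ^ (m-1) * x j0 ^ (m-1)) := by
    have e1 : σ * (t ^ (m-1) * x j0 ^ (m-1)) = σ * u j0 ^ (m-1) := by rw [h4, mul_pow]
    have e2 : lam * (t ^ (m-1) * x j0 ^ (m-1)) = t ^ (m-1) * (lam * x j0 ^ (m-1)) := by ring
    rw [e1, e2]
    exact le_trans h2 h3
  exact le_of_mul_le_mul_right hchain h5

lemma key_bound (hm : 2 ≤ m) {B : (Fin m → Fin n) → ℝ} (hB : ∀ g, 0 ≤ B g) {s : ℝ}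
    (hs : tRho B < s) {z : ℂ} {v : Fin n → ℂ} (hv : v ≠ 0)
    (hzv : (majMat B).map (fun a => (a:ℂ)) *ᵥ v = z • v) : ‖z‖ < s := by
  classical
  have hex : ∃ j, v j ≠ 0 := by
    by_contra h; push_neg at h; exact hv (funext fun j => h j)
  obtain ⟨j1, hj1⟩ := hex
  have hn : 0 < n := j1.2.trans_le' (Nat.zero_le _) |>.trans_le (le_refl n)
  set σ : ℝ := ‖z‖ with hσdef
  set u : Fin n → ℝ := fun i => ‖v i‖ with hudef
  have hu0 : ∀ i, 0 ≤ u i := fun i => norm_nonneg _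
  have huj1 : 0 < u j1 := by
    rw [hudef]
    exact norm_pos_iff.mpr hj1
  have hNu : ∀ i, σ * u i ≤ ∑ j, majMat B i j * u j := by
    intro i
    have h1 : z * v i = ∑ j, (majMat B i j : ℂ) * v j := by
      have h0 := congrFun hzv i
      simp only [Matrix.mulVec, dotProduct, Matrix.map_apply, Pi.smul_apply,
        smul_eq_mul] at h0
      exact h0.symm
    calc σ * u i = ‖z * v i‖ := by rw [norm_mul]
      _ = ‖∑ j, (majMat B i j : ℂ) * v j‖ := by rw [h1]
      _ ≤ ∑ j, ‖(majMat B i j : ℂ) * v j‖ := norm_sum_le _ _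
      _ = ∑ j, majMat B i j * u j := by
          refine Finset.sum_congr rfl fun j _ => ?_
          rw [norm_mul, Complex.norm_real,
            Real.norm_of_nonneg (by rw [majMat_apply_dg hm]; exact hB _)]
  have hm1 : m - 1 ≠ 0 := by omega
  have hm1R : ((m-1:ℕ):ℝ) ≠ 0 := by exact_mod_cast hm1
  set w : Fin n → ℝ := fun i => (u i) ^ (((m-1:ℕ):ℝ)⁻¹) with hwdef
  have hw0 : ∀ i, 0 ≤ w i := fun i => Real.rpow_nonneg (hu0 i) _
  have hwpow : ∀ i, w i ^ (m-1) = u i := by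
    intro i
    rw [hwdef]
    rw [← Real.rpow_natCast ((u i) ^ (((m-1:ℕ):ℝ)⁻¹)) (m-1), ← Real.rpow_mul (hu0 i),
      inv_mul_cancel₀ hm1R, Real.rpow_one]
  have hwj1 : 0 < w j1 := by rw [hwdef]; exact Real.rpow_pos_of_pos huj1 _
  have hkeyw : ∀ i, σ * w i ^ (m-1) ≤ tvp B w i := by
    intro i
    rw [hwpow i]
    refine le_trans (hNu i) ?_
    calc ∑ j, majMat B i j * u j = ∑ j, B (dg hm i j) * w j ^ (m-1) :=
          Finset.sum_congr rfl fun j _ => by rw [majMat_apply_dg hm, hwpow]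
      _ ≤ tvp B w i := diag_le_tvp hm hB hw0 i
  have hσ0 : 0 ≤ σ := norm_nonneg z
  set Λ : ℝ := (∑ g, (B g + 1)) * (n:ℝ)^(m-1) with hΛdef
  have hper : ∀ k : ℕ, ∃ (lam : ℝ) (x : Fin n → ℝ), x ∈ stdSimplex ℝ (Fin n) ∧
      σ ≤ lam ∧ lam ≤ Λ ∧ ∀ i, tvp (fun g => B g + 1/((k:ℝ)+1)) x i = lam * x i ^ (m-1) := by
    intro k
    have hε : (0:ℝ) < 1/((k:ℝ)+1) := by positivity
    have hCε : ∀ g : Fin m → Fin n, 1/((k:ℝ)+1) ≤ B g + 1/((k:ℝ)+1) := fun g => by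
      have := hB g; linarith
    obtain ⟨lam, x, hxΔ, hxpos, hlampos, heig⟩ := exists_eig_pos hm hn hε hCε
    have hC0 : ∀ g : Fin m → Fin n, 0 ≤ B g + 1/((k:ℝ)+1) :=
      fun g => add_nonneg (hB g) hε.le
    refine ⟨lam, x, hxΔ, ?_, ?_, heig⟩
    · refine cw_low hm hC0 hxpos heig hw0 hwj1 (fun i => ?_)
      refine le_trans (hkeyw i) ?_
      rw [tvp_split]
      have h1 : 0 ≤ tvp (fun _ : Fin m → Fin n => (1:ℝ)) w i :=
        tvp_nonneg (fun _ => zero_le_one) hw0 i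
      nlinarith
    · obtain ⟨jm, hjm1, -⟩ := simplex_exists_big hn hxΔ
      have h1 : tvp (fun g => B g + 1/((k:ℝ)+1)) x jm ≤ ∑ g, (B g + 1) := by
        refine le_trans (tvp_le_sum hC0 hxΔ.1 (simplex_le_one hxΔ) jm) ?_
        refine Finset.sum_le_sum fun g _ => ?_
        have h2 : 1/((k:ℝ)+1) ≤ 1 := by
          rw [div_le_one (by positivity)]
          linarith [Nat.cast_nonneg (α := ℝ) k]
        linarith
      rw [heig jm] at h1
      have hxp : ((1:ℝ)/n)^(m-1) ≤ x jm ^ (m-1) := pow_le_pow_left₀ (by positivity) hjm1 _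
      have h3 : lam * ((1:ℝ)/n)^(m-1) ≤ ∑ g, (B g + 1) :=
        le_trans (mul_le_mul_of_nonneg_left hxp hlampos.le) h1
      have hnp : (0:ℝ) < (n:ℝ)^(m-1) := by
        have : (0:ℝ) < n := by exact_mod_cast hn
        positivity
      rw [show ((1:ℝ)/n)^(m-1) = ((n:ℝ)^(m-1))⁻¹ by rw [one_div, inv_pow],
        ← div_eq_mul_inv, div_le_iff₀ hnp] at h3
      rw [hΛdef]
      exact h3
  choose lams xs hxsΔ hσle hΛle heigs using hper
  obtain ⟨lam, x, hxΔ, hσlam, heig⟩ := eig_limit hm hn hxsΔ hσle hΛle heigs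
  have hlam_le : lam ≤ tRho B := le_tRho hm hn hB hxΔ (le_trans hσ0 hσlam) heig
  calc σ ≤ lam := hσlam
    _ ≤ tRho B := hlam_le
    _ < s := hs

/-- a matrix as a 2-tensor -/
def mat2 (N : Matrix (Fin n) (Fin n) ℝ) : (Fin 2 → Fin n) → ℝ := fun g => N (g 0) (g 1)

lemma tvp_mat2 (N : Matrix (Fin n) (Fin n) ℝ) (x : Fin n → ℝ) (i : Fin n) :
    tvp (mat2 N) x i = (N *ᵥ x) i := by
  classical
  unfold tvp mat2
  rw [show (Finset.univ.erase (0 : Fin 2)) = {1} from by decide]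
  rw [← (piFinTwoEquiv (fun _ => Fin n)).symm.sum_comp]
  simp only [piFinTwoEquiv, Equiv.coe_fn_symm_mk, Fin.cons_zero, Fin.cons_one,
    Finset.prod_singleton]
  rw [Fintype.sum_prod_type]
  have h1 : ∀ a : Fin n, (∑ b : Fin n, if a = i then N a b * x b else 0)
      = if a = i then ∑ b, N a b * x b else 0 := by
    intro a
    split <;> simp
  simp only [h1]
  rw [Finset.sum_ite_eq' Finset.univ i (fun a => ∑ b, N a b * x b)]
  simp [Matrix.mulVec, dotProduct]

lemma eig_upper (hm : 2 ≤ m) (hn : 0 < n) {B : (Fin m → Fin n) → ℝ} (hB : ∀ g, 0 ≤ B g)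
    {k : ℕ} {lam : ℝ} {x : Fin n → ℝ} (hxΔ : x ∈ stdSimplex ℝ (Fin n)) (hlampos : 0 < lam)
    (heig : ∀ i, tvp (fun g => B g + 1/((k:ℝ)+1)) x i = lam * x i ^ (m-1)) :
    lam ≤ (∑ g, (B g + 1)) * (n:ℝ)^(m-1) := by
  have hε : (0:ℝ) < 1/((k:ℝ)+1) := by positivity
  have hC0 : ∀ g : Fin m → Fin n, 0 ≤ B g + 1/((k:ℝ)+1) := fun g => add_nonneg (hB g) hε.le
  obtain ⟨jm, hjm1, -⟩ := simplex_exists_big hn hxΔ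
  have h1 : tvp (fun g => B g + 1/((k:ℝ)+1)) x jm ≤ ∑ g, (B g + 1) := by
    refine le_trans (tvp_le_sum hC0 hxΔ.1 (simplex_le_one hxΔ) jm) ?_
    refine Finset.sum_le_sum fun g _ => ?_
    have h2 : 1/((k:ℝ)+1) ≤ 1 := by
      rw [div_le_one (by positivity)]
      linarith [Nat.cast_nonneg (α := ℝ) k]
    linarith
  rw [heig jm] at h1
  have hxp : ((1:ℝ)/n)^(m-1) ≤ x jm ^ (m-1) := pow_le_pow_left₀ (by positivity) hjm1 _
  have h3 : lam * ((1:ℝ)/n)^(m-1) ≤ ∑ g, (B g + 1) :=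
    le_trans (mul_le_mul_of_nonneg_left hxp hlampos.le) h1
  have hnp : (0:ℝ) < (n:ℝ)^(m-1) := by
    have : (0:ℝ) < n := by exact_mod_cast hn
    positivity
  rw [show ((1:ℝ)/n)^(m-1) = ((n:ℝ)^(m-1))⁻¹ by rw [one_div, inv_pow],
    ← div_eq_mul_inv, div_le_iff₀ hnp] at h3
  exact h3

lemma semipos (hn : 0 < n) {N : Matrix (Fin n) (Fin n) ℝ} (hN : ∀ i j, 0 ≤ N i j) {s : ℝ}
    (hs0 : 0 < s)
    (hkey : ∀ (z : ℂ) (v : Fin n → ℂ), v ≠ 0 →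
      N.map (fun a => (a:ℂ)) *ᵥ v = z • v → ‖z‖ < s) :
    ∃ y : Fin n → ℝ, (∀ i, 0 < y i) ∧ ∀ i, (N *ᵥ y) i < s * y i := by
  classical
  by_contra hcon
  push_neg at hcon
  have hm2 : (2:ℕ) ≤ 2 := le_refl 2
  have hB2 : ∀ g, 0 ≤ mat2 N g := fun g => hN _ _
  set Λ : ℝ := (∑ g, (mat2 N g + 1)) * (n:ℝ)^(2-1) with hΛdef
  have hper : ∀ k : ℕ, ∃ (lam : ℝ) (x : Fin n → ℝ), x ∈ stdSimplex ℝ (Fin n) ∧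
      s ≤ lam ∧ lam ≤ Λ ∧ ∀ i, tvp (fun g => mat2 N g + 1/((k:ℝ)+1)) x i
        = lam * x i ^ (2-1) := by
    intro k
    have hε : (0:ℝ) < 1/((k:ℝ)+1) := by positivity
    have hCε : ∀ g : Fin 2 → Fin n, 1/((k:ℝ)+1) ≤ mat2 N g + 1/((k:ℝ)+1) := fun g => by
      have := hB2 g; linarith
    obtain ⟨lam, x, hxΔ, hxpos, hlampos, heig⟩ := exists_eig_pos hm2 hn hε hCε
    refine ⟨lam, x, hxΔ, ?_, eig_upper hm2 hn hB2 hxΔ hlampos heig, heig⟩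
    obtain ⟨i, hi⟩ := hcon x hxpos
    have h1 : tvp (mat2 N) x i ≤ tvp (fun g => mat2 N g + 1/((k:ℝ)+1)) x i := by
      rw [tvp_split]
      have h2 := tvp_nonneg (fun _ : Fin 2 → Fin n => zero_le_one) (fun j => (hxΔ.1 j)) i
      nlinarith
    rw [heig i] at h1
    rw [← tvp_mat2] at hi
    have hxi : 0 < x i := hxpos i
    have h2 : s * x i ≤ lam * x i := by
      have h3 := le_trans hi h1
      have h4 : x i ^ (2-1) = x i := pow_one _
      rw [h4] at h3
      exact h3
    exact le_of_mul_le_mul_right h2 hxi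
  choose lams xs hxsΔ hsle hΛle heigs using hper
  obtain ⟨lam, x, hxΔ, hslam, heig⟩ := eig_limit hm2 hn hxsΔ hsle hΛle heigs
  have hNx : ∀ i, (∑ j, N i j * x j) = lam * x i := by
    intro i
    have h1 := heig i
    rw [tvp_mat2] at h1
    have h2 : x i ^ (2-1) = x i := pow_one _
    rw [h2] at h1
    simpa [Matrix.mulVec, dotProduct] using h1
  set vC : Fin n → ℂ := fun j => (x j : ℂ) with hvCdef
  have hvC0 : vC ≠ 0 := by
    intro h
    have h1 : ∀ j, x j = 0 := by
      intro j
      have h2 := congrFun h j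
      rw [hvCdef] at h2
      simpa using h2
    have h2 : (∑ j, x j) = 0 := Finset.sum_eq_zero fun j _ => h1 j
    rw [hxΔ.2] at h2
    norm_num at h2
  have hmv : N.map (fun a => (a:ℂ)) *ᵥ vC = (lam:ℂ) • vC := by
    funext i
    simp only [Matrix.mulVec, dotProduct, Matrix.map_apply, Pi.smul_apply,
      smul_eq_mul, hvCdef]
    have h1 : (∑ j, (N i j : ℂ) * (x j : ℂ)) = ((∑ j, N i j * x j : ℝ) : ℂ) := by
      push_cast
      rfl
    rw [h1, hNx i]
    push_cast
    ring
  have habs := hkey (lam : ℂ) vC hvC0 hmv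
  rw [Complex.norm_real, Real.norm_of_nonneg (le_trans hs0.le hslam)] at habs
  linarith


section Neumann

attribute [local instance] Matrix.linftyOpNormedAddCommGroup Matrix.linftyOpNormedRing
  Matrix.linftyOpNormedSpace Matrix.linftyOpNormedAlgebra

lemma entry_nonneg_pow {P : Matrix (Fin n) (Fin n) ℝ} (hP : ∀ i j, 0 ≤ P i j) :
    ∀ (t : ℕ) (i j : Fin n), 0 ≤ (P^t) i j := by
  intro t
  induction t with
  | zero =>
    intro i j
    rw [pow_zero]
    by_cases h : i = j <;> simp [Matrix.one_apply, h]
  | succ t ih =>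
    intro i j
    rw [pow_succ, Matrix.mul_apply]
    exact Finset.sum_nonneg fun l _ => mul_nonneg (ih i l) (hP l j)

lemma neumann (hn : 0 < n) {N : Matrix (Fin n) (Fin n) ℝ} (hN : ∀ i j, 0 ≤ N i j) {s : ℝ}
    (hs : 0 < s) {y : Fin n → ℝ} (hy : ∀ i, 0 < y i) (hNy : ∀ i, (N *ᵥ y) i < s * y i) :
    ∃ G : Matrix (Fin n) (Fin n) ℝ, (s • (1:Matrix (Fin n) (Fin n) ℝ) - N) * G = 1 ∧
      ∀ i j, 0 ≤ G i j := by
  classical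
  haveI : Nonempty (Fin n) := ⟨⟨0, hn⟩⟩
  set R : Matrix (Fin n) (Fin n) ℝ := Matrix.of (fun i j => N i j * y j / (s * y i)) with hRdef
  have hR0 : ∀ i j, 0 ≤ R i j := fun i j => by
    rw [hRdef]
    exact div_nonneg (mul_nonneg (hN i j) (hy j).le) (mul_nonneg hs.le (hy i).le)
  have hRsum : ∀ i, ∑ j, R i j < 1 := by
    intro i
    have h1 : ∑ j, R i j = (∑ j, N i j * y j) / (s * y i) := by
      simp only [hRdef, Matrix.of_apply]
      rw [← Finset.sum_div]
    rw [h1, div_lt_one (mul_pos hs (hy i))]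
    have h2 := hNy i
    simpa [Matrix.mulVec, dotProduct] using h2
  have hRnorm : ‖R‖ < 1 := by
    rw [Matrix.linfty_opNorm_def]
    have hsup : (Finset.univ.sup fun i => ∑ j, ‖R i j‖₊) < 1 := by
      rw [Finset.sup_lt_iff (by norm_num : (⊥ : NNReal) < 1)]
      intro i _
      rw [← NNReal.coe_lt_coe]
      push_cast
      calc ∑ j, (‖R i j‖₊ : ℝ) = ∑ j, R i j := by
            refine Finset.sum_congr rfl fun j _ => ?_
            rw [coe_nnnorm, Real.norm_eq_abs, abs_of_nonneg (hR0 i j)]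
        _ < 1 := hRsum i
    exact_mod_cast hsup
  set W : Matrix (Fin n) (Fin n) ℝ := ∑' t : ℕ, R^t with hWdef
  have hWsum : HasSum (fun t : ℕ => R^t) W :=
    (summable_geometric_of_norm_lt_one hRnorm).hasSum
  have hW1 : (1 - R) * W = 1 := by
    rw [hWdef]
    exact mul_neg_geom_series R hRnorm
  have hW0 : ∀ i j, 0 ≤ W i j := by
    intro i j
    set φ : Matrix (Fin n) (Fin n) ℝ →ₗ[ℝ] ℝ :=
      { toFun := fun M => M i j, map_add' := fun a b => rfl, map_smul' := fun c a => rfl }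
    have hφc : Continuous φ := LinearMap.continuous_of_finiteDimensional φ
    have hsum2 : HasSum (fun t : ℕ => (R^t) i j) (W i j) := hWsum.map φ hφc
    exact hsum2.nonneg fun t => entry_nonneg_pow hR0 t i j
  set D : Matrix (Fin n) (Fin n) ℝ := Matrix.diagonal y with hDdef
  set D' : Matrix (Fin n) (Fin n) ℝ := Matrix.diagonal (fun i => (y i)⁻¹) with hD'def
  have hDD' : D * D' = 1 := by
    rw [hDdef, hD'def, Matrix.diagonal_mul_diagonal,
      show (fun i => y i * (y i)⁻¹) = fun _ => (1:ℝ) from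
        funext fun i => mul_inv_cancel₀ (hy i).ne']
    exact Matrix.diagonal_one
  have hD'D : D' * D = 1 := by
    rw [hDdef, hD'def, Matrix.diagonal_mul_diagonal,
      show (fun i => (y i)⁻¹ * y i) = fun _ => (1:ℝ) from
        funext fun i => inv_mul_cancel₀ (hy i).ne']
    exact Matrix.diagonal_one
  have hNR : D * R * D' = s⁻¹ • N := by
    ext i j
    rw [Matrix.mul_diagonal, Matrix.diagonal_mul]
    simp only [hRdef, Matrix.of_apply, Matrix.smul_apply, smul_eq_mul]
    have h1 : y i ≠ 0 := (hy i).ne'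
    have h2 : y j ≠ 0 := (hy j).ne'
    have h3 : s ≠ 0 := hs.ne'
    field_simp
  have hfact : s • (1:Matrix (Fin n) (Fin n) ℝ) - N = s • (D * (1 - R) * D') := by
    have h1 : D * (1 - R) * D' = D * D' - D * R * D' := by
      rw [Matrix.mul_sub, Matrix.mul_one, Matrix.sub_mul]
    rw [h1, hDD', hNR, smul_sub, smul_smul, mul_inv_cancel₀ hs.ne', one_smul]
  refine ⟨s⁻¹ • (D * W * D'), ?_, ?_⟩
  · rw [hfact, Matrix.smul_mul, Matrix.mul_smul, smul_smul, mul_inv_cancel₀ hs.ne', one_smul]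
    simp only [Matrix.mul_assoc]
    rw [← Matrix.mul_assoc D' D (W * D'), hD'D, Matrix.one_mul]
    rw [← Matrix.mul_assoc (1-R) W D', hW1, Matrix.one_mul]
    exact hDD'
  · intro i j
    rw [Matrix.smul_apply, Matrix.mul_diagonal, Matrix.diagonal_mul, smul_eq_mul]
    exact mul_nonneg (inv_nonneg.mpr hs.le)
      (mul_nonneg (mul_nonneg (hy i).le (hW0 i j)) (inv_nonneg.mpr (hy j).le))

end Neumann
end Aux
theorem stmt4 {m n : ℕ} [NeZero m] (hm : 2 ≤ m)
    (A : (Fin m → Fin n) → ℝ) (hA : isNonsingMTensor A) :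
    (∀ g, 0 ≤ matTen (majMat A) (idT m n) g - A g) ∧
    rowDiag (matTen (majMat A) (idT m n)) ∧
    IsUnit (majMat A) ∧
    (∀ i j, 0 ≤ (majMat A)⁻¹ i j) := by
  classical
  obtain ⟨s, B, hB, hs, hAeq⟩ := hA
  have hs0 : 0 < s := lt_of_le_of_lt (Aux.tRho_nonneg B) hs
  -- Part 1
  have hpart1 : ∀ g, 0 ≤ matTen (majMat A) (idT m n) g - A g := by
    intro g
    by_cases hconst : ∀ k, k ≠ 0 → g k = g (Aux.f1 hm)
    · have h1 : matTen (majMat A) (idT m n) g = A g := by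
        unfold matTen
        have h2 : ∀ j, idT m n (Function.update g 0 j) = if j = g (Aux.f1 hm) then 1 else 0 := by
          intro j
          unfold idT
          have h3 : (∀ k, Function.update g 0 j k = Function.update g 0 j 0)
              ↔ j = g (Aux.f1 hm) := by
            constructor
            · intro hall
              have ha := hall (Aux.f1 hm)
              rw [Function.update_of_ne (Aux.f1_ne hm), Function.update_self] at ha
              exact ha.symm
            · intro hj k
              rw [Function.update_self]
              by_cases hk : k = 0
              · rw [hk, Function.update_self]
              · rw [Function.update_of_ne hk, hconst k hk, ← hj]
          rw [if_congr h3 rfl rfl]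
        simp only [h2, mul_ite, mul_one, mul_zero]
        rw [Finset.sum_ite_eq' Finset.univ (g (Aux.f1 hm)) (fun j => majMat A (g 0) j)]
        rw [if_pos (Finset.mem_univ _)]
        have h4 : (fun k => if k = 0 then g 0 else g (Aux.f1 hm)) = g := by
          funext k
          by_cases hk : k = 0
          · rw [hk]; simp
          · simp only [hk, if_false]
            exact (hconst k hk).symm
        show A (fun k => if k = 0 then g 0 else g (Aux.f1 hm)) = A g
        rw [h4]
      rw [h1]
      simp
    · push_neg at hconst
      obtain ⟨k0, hk0ne, hk0⟩ := hconst
      have h1 : matTen (majMat A) (idT m n) g = 0 := by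
        unfold matTen
        refine Finset.sum_eq_zero fun j _ => ?_
        have h2 : idT m n (Function.update g 0 j) = 0 := by
          unfold idT
          rw [if_neg]
          intro hall
          have ha := hall k0
          have hb := hall (Aux.f1 hm)
          rw [Function.update_of_ne hk0ne, Function.update_self] at ha
          rw [Function.update_of_ne (Aux.f1_ne hm), Function.update_self] at hb
          exact hk0 (ha.trans hb.symm)
        rw [h2, mul_zero]
      have h2 : idT m n g = 0 := by
        unfold idT
        rw [if_neg]
        intro hall
        exact hk0 ((hall k0).trans (hall (Aux.f1 hm)).symm)
      have h3 : A g = - B g := by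
        rw [hAeq]
        simp [h2]
      rw [h1, h3]
      simpa using hB g
  -- Part 2
  have hpart2 : rowDiag (matTen (majMat A) (idT m n)) := by
    rintro g ⟨k, l, hk, hl, hkl⟩
    unfold matTen
    refine Finset.sum_eq_zero fun j _ => ?_
    have h1 : idT m n (Function.update g 0 j) = 0 := by
      unfold idT
      rw [if_neg]
      intro hall
      have ha := (hall k).trans (hall l).symm
      rw [Function.update_of_ne hk, Function.update_of_ne hl] at ha
      exact hkl ha
    rw [h1, mul_zero]
  rcases Nat.eq_zero_or_pos n with hn0 | hn
  · subst hn0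
    refine ⟨hpart1, hpart2, ?_, ?_⟩
    · rw [Matrix.isUnit_iff_isUnit_det, Matrix.det_isEmpty]
      exact isUnit_one
    · intro i j
      exact i.elim0
  · have hmaj : majMat A = s • (1:Matrix (Fin n) (Fin n) ℝ) - majMat B := by
      ext i j
      have h1 : majMat A i j = s * idT m n (Aux.dg hm i j) - B (Aux.dg hm i j) := by
        rw [Aux.majMat_apply_dg hm, hAeq]
        simp [Pi.sub_apply, Pi.smul_apply, smul_eq_mul]
      have h2 : idT m n (Aux.dg hm i j) = if i = j then 1 else 0 := by
        unfold idT
        have h3 : (∀ k, Aux.dg hm i j k = Aux.dg hm i j 0) ↔ i = j := by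
          constructor
          · intro hall
            have ha := hall (Aux.f1 hm)
            simp only [Aux.dg, Aux.f1_ne hm, if_false, if_true, if_neg (Aux.f1_ne hm)] at ha
            exact ha.symm
          · intro hij k
            simp only [Aux.dg]
            split <;> simp [hij]
        rw [if_congr h3 rfl rfl]
      rw [h1, h2]
      simp only [Matrix.sub_apply, Matrix.smul_apply, Matrix.one_apply, smul_eq_mul,
        Aux.majMat_apply_dg hm]
    have hNmaj : ∀ i j, 0 ≤ majMat B i j := fun i j => by
      rw [Aux.majMat_apply_dg hm]
      exact hB _
    have hkey : ∀ (z : ℂ) (v : Fin n → ℂ), v ≠ 0 →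
        (majMat B).map (fun a => (a:ℂ)) *ᵥ v = z • v → ‖z‖ < s :=
      fun z v hv hzv => Aux.key_bound hm hB hs hv hzv
    obtain ⟨y, hy, hNy⟩ := Aux.semipos hn hNmaj hs0 hkey
    obtain ⟨G, hG1, hG0⟩ := Aux.neumann hn hNmaj hs0 hy hNy
    rw [← hmaj] at hG1
    refine ⟨hpart1, hpart2, ?_, ?_⟩
    · exact (Matrix.isUnit_iff_isUnit_det _).mpr (Matrix.isUnit_det_of_right_inverse hG1)
    · rw [Matrix.inv_eq_right_inv hG1]
      exact hG0
end
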